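/- arXiv:2306.13057 — 6 statements merged into one kernel-verified Lean document; each statement's English description precedes it below -/
import Mathlib

section
/- Let m, t be positive integers with m ≥ 30000 and t ≤ √m/16000, and let N = m^{13t}. If x_1, …, x_N are drawn i.i.d. from N(0, I_m), then with probability at least 0.8 the following hold simultaneously: (a) 0.9·√m ≤ ‖x_i‖₂ ≤ 1.1·√m for every i ∈ [N]; (b) ‖x_i − x_j‖₂ ≥ √m for every pair of distinct indices i ≠ j in [N]. -/
open MeasureTheory Matrix

/-- Squared Euclidean norm of a vector in `ℝ^m`. -/
noncomputable def sqNorm {m : ℕ} (x : Fin m → ℝ) : ℝ := ∑ i, (x i)^2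

/-- Euclidean (ℓ₂) norm of a vector in `ℝ^m`. -/
noncomputable def enorm2 {m : ℕ} (x : Fin m → ℝ) : ℝ := Real.sqrt (sqNorm x)

/-- Density of the Gaussian `N(μ, δ·I_m)` on `ℝ^m`. -/
noncomputable def gaussDensity {m : ℕ} (μ : Fin m → ℝ) (δ : ℝ) (x : Fin m → ℝ) : ℝ :=
  (2 * Real.pi * δ) ^ (-(m:ℝ)/2) * Real.exp (-(sqNorm (x - μ)) / (2*δ))

/-- Density of the standard Gaussian `N(0, I_m)` on `ℝ^m`. -/
noncomputable def stdGaussDensity (m : ℕ) : (Fin m → ℝ) → ℝ := gaussDensity 0 1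

/-- The Gaussian measure `N(μ, δ·I_m)` on `ℝ^m`. -/
noncomputable def gaussMeasure {m : ℕ} (μ : Fin m → ℝ) (δ : ℝ) : Measure (Fin m → ℝ) :=
  volume.withDensity fun x => ENNReal.ofReal (gaussDensity μ δ x)

/-- The standard Gaussian measure `N(0, I_m)` on `ℝ^m`. -/
noncomputable def stdGauss (m : ℕ) : Measure (Fin m → ℝ) := gaussMeasure 0 1

open Real Set Function

section Aux
variable {m : ℕ}

lemma sqNorm_nonneg (x : Fin m → ℝ) : 0 ≤ sqNorm x :=
  Finset.sum_nonneg fun _ _ => sq_nonneg _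

lemma measurable_sqNorm : Measurable (sqNorm (m := m)) := by
  unfold sqNorm
  exact Finset.measurable_sum _ fun i _ => (measurable_pi_apply i).pow_const 2

lemma stdGaussDensity_apply (x : Fin m → ℝ) :
    stdGaussDensity m x = (2 * π) ^ (-(m:ℝ)/2) * Real.exp (-(sqNorm x)/2) := by
  simp [stdGaussDensity, gaussDensity]

lemma measurable_gaussDensity01 : Measurable fun x : Fin m → ℝ => gaussDensity 0 1 x := by
  have : ∀ x : Fin m → ℝ, gaussDensity 0 1 x
      = (2 * π) ^ (-(m:ℝ)/2) * Real.exp (-(sqNorm x)/2) := fun x => stdGaussDensity_apply x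
  simp only [this]
  exact (measurable_const.mul ((measurable_sqNorm.neg.div_const 2).exp))

lemma rpow_neg_half_pow {a : ℝ} (ha : 0 ≤ a) (m : ℕ) :
    a ^ (-(m:ℝ)/2) = ((Real.sqrt a)⁻¹) ^ m := by
  have h1 : (-(m:ℝ)/2) = (1/(2:ℝ)) * (-(m:ℝ)) := by ring
  rw [h1, Real.rpow_mul ha, ← Real.sqrt_eq_rpow, Real.rpow_neg (Real.sqrt_nonneg a),
    Real.rpow_natCast, inv_pow]

lemma pow_eq_exp {a : ℝ} (ha : 0 < a) (m : ℕ) : a ^ m = Real.exp (m * Real.log a) := by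
  rw [← Real.log_pow, Real.exp_log (pow_pos ha m)]

lemma densityA (c : ℝ) (x : Fin m → ℝ) :
    Real.exp (c * sqNorm x) * stdGaussDensity m x
      = ∏ i, ((Real.sqrt (2*π))⁻¹ * Real.exp (-((1/2 - c) * (x i - 0)^2))) := by
  rw [stdGaussDensity_apply, rpow_neg_half_pow (by positivity)]
  rw [Finset.prod_mul_distrib, Finset.prod_const, ← Real.exp_sum]
  have h1 : ∑ i, -((1/2 - c) * (x i - 0)^2) = c * sqNorm x + (-(sqNorm x)/2) := by
    have h2 : ∀ i : Fin m, -((1/2 - c) * (x i - 0)^2) = c * (x i)^2 - (x i)^2/2 :=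
      fun i => by ring
    simp_rw [h2]
    rw [Finset.sum_sub_distrib, ← Finset.mul_sum, ← Finset.sum_div]
    unfold sqNorm
    ring
  rw [h1, Real.exp_add]
  rw [Finset.card_univ, Fintype.card_fin]
  ring

end Aux
section Aux2
variable {m : ℕ}

lemma gaussDensity01_nonneg {m : ℕ} (x : Fin m → ℝ) : 0 ≤ gaussDensity 0 1 x := by
  rw [show gaussDensity (0 : Fin m → ℝ) 1 x
      = (2 * π) ^ (-(m:ℝ)/2) * Real.exp (-(sqNorm x)/2) from stdGaussDensity_apply x]
  positivity

lemma densityB (u x : Fin m → ℝ) :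
    Real.exp (-(1/4) * sqNorm (u - x)) * stdGaussDensity m x
      = ∏ i, ((Real.sqrt (2*π))⁻¹ *
          Real.exp (-((3/4) * (x i - u i/3)^2)) * Real.exp (-((u i)^2)/6)) := by
  rw [stdGaussDensity_apply, rpow_neg_half_pow (by positivity)]
  simp_rw [mul_assoc, ← Real.exp_add]
  rw [Finset.prod_mul_distrib, Finset.prod_const, ← Real.exp_sum]
  have h1 : ∑ i, (-((3/4) * (x i - u i/3)^2) + -((u i)^2)/6)
      = -(1/4) * sqNorm (u - x) + (-(sqNorm x)/2) := by
    have h2 : ∀ i : Fin m, (-((3/4) * (x i - u i/3)^2) + -((u i)^2)/6)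
        = (-(1/4)) * (u i - x i)^2 - (x i)^2/2 := fun i => by ring
    simp_rw [h2]
    rw [Finset.sum_sub_distrib, ← Finset.mul_sum, ← Finset.sum_div]
    have h3 : sqNorm (u - x) = ∑ i, (u i - x i)^2 := by
      unfold sqNorm; simp [Pi.sub_apply]
    rw [h3]
    unfold sqNorm
    ring
  rw [h1, Real.exp_add]
  rw [Finset.card_univ, Fintype.card_fin]
  ring

lemma integrable_K_gauss (b d A : ℝ) (hb : 0 < b) :
    Integrable (fun y : ℝ => A * Real.exp (-(b * (y - d)^2))) := by
  apply Integrable.const_mul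
  have h : Integrable (fun y : ℝ => Real.exp (-b * y^2)) := integrable_exp_neg_mul_sq hb
  have h2 := h.comp_sub_right d
  simpa [neg_mul] using h2

lemma integral_K_gauss (b d : ℝ) (hb : 0 < b) :
    ∫ y : ℝ, (Real.sqrt (2*π))⁻¹ * Real.exp (-(b * (y - d)^2))
      = Real.sqrt (2*b)⁻¹ := by
  rw [MeasureTheory.integral_const_mul]
  have h1 : ∫ y : ℝ, Real.exp (-(b * (y - d)^2))
      = ∫ y : ℝ, Real.exp (-b * y^2) := by
    have := integral_sub_right_eq_self (μ := volume) (fun y : ℝ => Real.exp (-b * y^2)) d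
    rw [← this]
    congr 1
    ext y
    rw [neg_mul]
  rw [h1, integral_gaussian, inv_mul_eq_div, ← Real.sqrt_div (by positivity : (0:ℝ) ≤ π/b)]
  congr 1
  field_simp

lemma lintegral_ofReal_prod (f : Fin m → ℝ → ℝ) (hi : ∀ i, Integrable (f i))
    (h0 : ∀ i y, 0 ≤ f i y) :
    ∫⁻ x : Fin m → ℝ, ENNReal.ofReal (∏ i, f i (x i))
      = ENNReal.ofReal (∏ i, ∫ y, f i y) := by
  rw [← MeasureTheory.integral_fintype_prod_eq_prod (𝕜 := ℝ) f]
  rw [← MeasureTheory.ofReal_integral_eq_lintegral_ofReal]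
  · rfl
  · exact MeasureTheory.Integrable.fintype_prod hi
  · exact Filter.Eventually.of_forall fun x => Finset.prod_nonneg fun i _ => h0 i _

lemma stdGauss_mgf (c : ℝ) (hc : c < 1/2) :
    ∫⁻ x, ENNReal.ofReal (Real.exp (c * sqNorm x)) ∂(stdGauss m)
      = ENNReal.ofReal ((Real.sqrt (1 - 2*c)⁻¹) ^ m) := by
  rw [stdGauss, gaussMeasure,
    lintegral_withDensity_eq_lintegral_mul _
      (measurable_gaussDensity01.ennreal_ofReal)
      ((measurable_sqNorm.const_mul c).exp.ennreal_ofReal)]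
  simp only [Pi.mul_apply]
  have h1 : ∀ x : Fin m → ℝ,
      ENNReal.ofReal (gaussDensity 0 1 x) * ENNReal.ofReal (Real.exp (c * sqNorm x))
      = ENNReal.ofReal (∏ i, ((Real.sqrt (2*π))⁻¹ *
          Real.exp (-((1/2 - c) * (x i - 0)^2)))) := by
    intro x
    rw [← ENNReal.ofReal_mul (gaussDensity01_nonneg x), mul_comm]
    congr 1
    exact densityA c x
  rw [lintegral_congr h1]
  rw [lintegral_ofReal_prod _ (fun i => integrable_K_gauss _ 0 _ (by linarith))
    (fun i y => by positivity)]
  rw [Finset.prod_congr rfl (fun i _ => integral_K_gauss (1/2 - c) 0 (by linarith)),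
    Finset.prod_const, Finset.card_univ, Fintype.card_fin]
  congr 2
  ring

lemma stdGauss_shift (u : Fin m → ℝ) :
    ∫⁻ x, ENNReal.ofReal (Real.exp (-(1/4) * sqNorm (u - x))) ∂(stdGauss m)
      = ENNReal.ofReal ((Real.sqrt (3/2)⁻¹) ^ m * Real.exp (-(1/6) * sqNorm u)) := by
  have hmeas : Measurable fun x : Fin m → ℝ => sqNorm (u - x) :=
    measurable_sqNorm.comp (measurable_const.sub measurable_id)
  rw [stdGauss, gaussMeasure,
    lintegral_withDensity_eq_lintegral_mul _
      (measurable_gaussDensity01.ennreal_ofReal)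
      ((hmeas.const_mul _).exp.ennreal_ofReal)]
  simp only [Pi.mul_apply]
  have h1 : ∀ x : Fin m → ℝ,
      ENNReal.ofReal (gaussDensity 0 1 x) *
        ENNReal.ofReal (Real.exp (-(1/4) * sqNorm (u - x)))
      = ENNReal.ofReal (∏ i, ((Real.sqrt (2*π))⁻¹ *
          Real.exp (-((3/4) * (x i - u i/3)^2)) * Real.exp (-((u i)^2)/6))) := by
    intro x
    rw [← ENNReal.ofReal_mul (gaussDensity01_nonneg x), mul_comm]
    congr 1
    exact densityB u x
  rw [lintegral_congr h1]
  rw [lintegral_ofReal_prod _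
    (fun i => ((integrable_K_gauss (3/4) (u i/3) _ (by norm_num)).mul_const _))
    (fun i y => by positivity)]
  congr 1
  have h2 : ∀ i : Fin m, (∫ y : ℝ, (Real.sqrt (2*π))⁻¹ *
      Real.exp (-((3/4) * (y - u i/3)^2)) * Real.exp (-((u i)^2)/6))
      = (Real.sqrt (3/2)⁻¹) * Real.exp (-((u i)^2)/6) := by
    intro i
    rw [MeasureTheory.integral_mul_const, integral_K_gauss (3/4) (u i/3) (by norm_num)]
    norm_num
  rw [Finset.prod_congr rfl (fun i _ => h2 i), Finset.prod_mul_distrib, Finset.prod_const,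
    Finset.card_univ, Fintype.card_fin, ← Real.exp_sum]
  congr 2
  unfold sqNorm
  rw [Finset.mul_sum]
  exact Finset.sum_congr rfl fun i _ => by ring

end Aux2
open scoped ENNReal

section Aux3

instance stdGauss_prob (m : ℕ) : IsProbabilityMeasure (stdGauss m) := by
  constructor
  have h := stdGauss_mgf (m := m) 0 (by norm_num)
  simp only [zero_mul, Real.exp_zero, ENNReal.ofReal_one, lintegral_one] at h
  simpa using h

lemma chernoff {α : Type*} [MeasurableSpace α] (μ : Measure α) (f : α → ℝ)
    (hf : Measurable f) (c : ℝ) :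
    μ {x | c ≤ f x} ≤ ENNReal.ofReal (Real.exp (-c)) *
      ∫⁻ x, ENNReal.ofReal (Real.exp (f x)) ∂μ := by
  have hset : {x | c ≤ f x} = {x | ENNReal.ofReal (Real.exp c)
      ≤ ENNReal.ofReal (Real.exp (f x))} := by
    ext x
    simp [ENNReal.ofReal_le_ofReal_iff (Real.exp_nonneg _), Real.exp_le_exp]
  have h1 := mul_meas_ge_le_lintegral₀ (μ := μ)
    (f := fun x => ENNReal.ofReal (Real.exp (f x)))
    (hf.exp.ennreal_ofReal.aemeasurable) (ENNReal.ofReal (Real.exp c))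
  rw [← hset] at h1
  calc μ {x | c ≤ f x}
      = ENNReal.ofReal (Real.exp (-c)) * (ENNReal.ofReal (Real.exp c) * μ {x | c ≤ f x}) := by
        rw [← mul_assoc, ← ENNReal.ofReal_mul (Real.exp_nonneg _), ← Real.exp_add,
          neg_add_cancel, Real.exp_zero, ENNReal.ofReal_one, one_mul]
    _ ≤ _ := mul_le_mul_right h1 _

section Marginal
variable {N : ℕ} {α : Type*} [MeasurableSpace α] (μ : Measure α) [IsProbabilityMeasure μ]
  [Nonempty α]

open Finset in
lemma lmarginal_of_const (s : Finset (Fin N)) (f : (Fin N → α) → ℝ≥0∞) (hf : Measurable f)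
    (h : ∀ (x : Fin N → α) (k : Fin N), k ∈ s → ∀ t, f (Function.update x k t) = f x) :
    (∫⋯∫⁻_s, f ∂(fun _ => μ)) = f := by
  induction s using Finset.induction with
  | empty => simp
  | @insert k s hk ih =>
    funext x
    rw [lmarginal_insert _ hf hk x]
    have ih' := ih (fun x k hk t => h x k (Finset.mem_insert_of_mem hk) t)
    simp_rw [ih']
    simp_rw [h x k (Finset.mem_insert_self k s)]
    simp

lemma lintegral_pi_eval (i : Fin N) (g : α → ℝ≥0∞) (hg : Measurable g) :
    ∫⁻ x, g (x i) ∂(Measure.pi fun _ : Fin N => μ) = ∫⁻ u, g u ∂μ := by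
  obtain ⟨a⟩ := ‹Nonempty α›
  have hF : Measurable fun x : Fin N → α => g (x i) := hg.comp (measurable_pi_apply i)
  rw [lintegral_eq_lmarginal_univ (μ := fun _ => μ) (fun _ => a)]
  rw [← Finset.insert_erase (Finset.mem_univ i),
    lmarginal_insert _ hF (Finset.notMem_erase i _)]
  have hc := lmarginal_of_const μ (Finset.univ.erase i) (fun x : Fin N → α => g (x i)) hF
    (fun x k hk t => by
      show g (Function.update x k t i) = g (x i)
      rw [Function.update_of_ne (Ne.symm (Finset.ne_of_mem_erase hk))])
  simp_rw [hc]
  simp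

lemma lintegral_pi_pair (i j : Fin N) (hij : i ≠ j) (g : α → α → ℝ≥0∞)
    (hg : Measurable (Function.uncurry g)) :
    ∫⁻ x, g (x i) (x j) ∂(Measure.pi fun _ : Fin N => μ)
      = ∫⁻ u, ∫⁻ v, g u v ∂μ ∂μ := by
  obtain ⟨a⟩ := ‹Nonempty α›
  have hF : Measurable fun x : Fin N → α => g (x i) (x j) := by
    have h1 : Measurable fun x : Fin N → α => (x i, x j) :=
      Measurable.prodMk (measurable_pi_apply i) (measurable_pi_apply j)
    exact hg.comp h1
  have hswap : ∀ u : α, Measurable (g u) := fun u =>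
    hg.comp (measurable_prodMk_left)
  set s : Finset (Fin N) := (Finset.univ.erase i).erase j with hs
  have hjs : j ∉ s := Finset.notMem_erase j _
  have his : i ∉ insert j s := by
    simp only [Finset.mem_insert, hs]
    push_neg
    exact ⟨hij, fun h => (Finset.notMem_erase i Finset.univ)
      (Finset.mem_of_mem_erase h)⟩
  have huniv : (Finset.univ : Finset (Fin N)) = insert i (insert j s) := by
    rw [hs, Finset.insert_erase (Finset.mem_erase.mpr ⟨Ne.symm hij, Finset.mem_univ j⟩),
      Finset.insert_erase (Finset.mem_univ i)]
  rw [lintegral_eq_lmarginal_univ (μ := fun _ => μ) (fun _ => a), huniv,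
    lmarginal_insert _ hF his]
  have hc := lmarginal_of_const μ s (fun x : Fin N → α => g (x i) (x j)) hF
    (fun x k hk t => by
      have hk' := Finset.mem_erase.mp hk
      have hk'' := Finset.mem_erase.mp hk'.2
      show g (Function.update x k t i) (Function.update x k t j) = g (x i) (x j)
      rw [Function.update_of_ne hk''.1.symm, Function.update_of_ne hk'.1.symm])
  apply lintegral_congr
  intro u
  rw [lmarginal_insert _ hF hjs]
  apply lintegral_congr
  intro v
  simp_rw [hc]
  rw [Function.update_of_ne hij, Function.update_self, Function.update_self]

end Marginal
end Aux3
section Tails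
variable {m N : ℕ}

lemma bound_hi (i : Fin N) :
    (Measure.pi fun _ : Fin N => stdGauss m) {x | 1.21 * m ≤ sqNorm (x i)}
      ≤ ENNReal.ofReal (Real.exp (-0.004 * m)) := by
  have hmono : {x : Fin N → (Fin m → ℝ) | 1.21 * m ≤ sqNorm (x i)}
      ⊆ {x | 1.21 * m/12 ≤ (1/12 : ℝ) * sqNorm (x i)} := fun x hx => by
    simp only [Set.mem_setOf_eq] at *; linarith
  have hf : Measurable fun x : Fin N → (Fin m → ℝ) => (1/12 : ℝ) * sqNorm (x i) :=
    (measurable_sqNorm.comp (measurable_pi_apply i)).const_mul _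
  refine le_trans (measure_mono hmono)
    (le_trans (chernoff _ _ hf (1.21 * m/12)) ?_)
  rw [lintegral_pi_eval (stdGauss m) i
    (fun u => ENNReal.ofReal (Real.exp ((1/12 : ℝ) * sqNorm u)))
    ((measurable_sqNorm.const_mul _).exp.ennreal_ofReal)]
  rw [stdGauss_mgf (1/12) (by norm_num),
    show ((1 : ℝ) - 2 * (1/12))⁻¹ = 6/5 by norm_num,
    ← ENNReal.ofReal_mul (Real.exp_nonneg _)]
  apply ENNReal.ofReal_le_ofReal
  have hs0 : 0 < Real.sqrt (6/5) := Real.sqrt_pos.mpr (by norm_num)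
  have hs : Real.sqrt (6/5) ≤ 1.0955 := by
    rw [show (1.0955:ℝ) = Real.sqrt (1.0955^2) from (Real.sqrt_sq (by norm_num)).symm]
    exact Real.sqrt_le_sqrt (by norm_num)
  rw [pow_eq_exp hs0, ← Real.exp_add]
  apply Real.exp_le_exp.mpr
  have hlog : Real.log (Real.sqrt (6/5)) ≤ 0.0955 :=
    le_trans (Real.log_le_sub_one_of_pos hs0) (by linarith)
  have hm' : (0:ℝ) ≤ m := Nat.cast_nonneg m
  nlinarith [mul_le_mul_of_nonneg_left hlog hm']

lemma bound_lo (i : Fin N) :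
    (Measure.pi fun _ : Fin N => stdGauss m) {x | sqNorm (x i) ≤ 0.81 * m}
      ≤ ENNReal.ofReal (Real.exp (-0.004 * m)) := by
  have hmono : {x : Fin N → (Fin m → ℝ) | sqNorm (x i) ≤ 0.81 * m}
      ⊆ {x | -(0.81 * m/8) ≤ -(1/8 : ℝ) * sqNorm (x i)} := fun x hx => by
    simp only [Set.mem_setOf_eq] at *; linarith
  have hf : Measurable fun x : Fin N → (Fin m → ℝ) => -(1/8 : ℝ) * sqNorm (x i) :=
    (measurable_sqNorm.comp (measurable_pi_apply i)).const_mul _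
  refine le_trans (measure_mono hmono)
    (le_trans (chernoff _ _ hf (-(0.81 * m/8))) ?_)
  rw [lintegral_pi_eval (stdGauss m) i
    (fun u => ENNReal.ofReal (Real.exp (-(1/8 : ℝ) * sqNorm u)))
    ((measurable_sqNorm.const_mul _).exp.ennreal_ofReal)]
  rw [stdGauss_mgf (-(1/8)) (by norm_num),
    show ((1 : ℝ) - 2 * (-(1/8)))⁻¹ = 4/5 by norm_num,
    ← ENNReal.ofReal_mul (Real.exp_nonneg _)]
  apply ENNReal.ofReal_le_ofReal
  have hs0 : 0 < Real.sqrt (4/5) := Real.sqrt_pos.mpr (by norm_num)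
  have h1 : (1.118:ℝ) ≤ Real.sqrt (5/4) :=
    (Real.le_sqrt (by norm_num) (by norm_num)).mpr (by norm_num)
  have h2 : Real.sqrt (4/5) = (Real.sqrt (5/4))⁻¹ := by
    rw [← Real.sqrt_inv]; norm_num
  have hlog : Real.log (Real.sqrt (4/5)) ≤ -0.1055 := by
    rw [h2]
    refine le_trans (Real.log_le_sub_one_of_pos (by positivity)) ?_
    have h3 : (Real.sqrt (5/4))⁻¹ ≤ (1.118 : ℝ)⁻¹ :=
      inv_anti₀ (by norm_num) h1
    have : ((1.118 : ℝ))⁻¹ - 1 ≤ -0.1055 := by norm_num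
    linarith
  rw [pow_eq_exp hs0, ← Real.exp_add]
  apply Real.exp_le_exp.mpr
  have hm' : (0:ℝ) ≤ m := Nat.cast_nonneg m
  nlinarith [mul_le_mul_of_nonneg_left hlog hm']

lemma bound_pair (i j : Fin N) (hij : i ≠ j) :
    (Measure.pi fun _ : Fin N => stdGauss m) {x | sqNorm (x i - x j) ≤ (m:ℝ)}
      ≤ ENNReal.ofReal (Real.exp (-0.04 * m)) := by
  have hmono : {x : Fin N → (Fin m → ℝ) | sqNorm (x i - x j) ≤ (m:ℝ)}
      ⊆ {x | -((m:ℝ)/4) ≤ -(1/4 : ℝ) * sqNorm (x i - x j)} := fun x hx => by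
    simp only [Set.mem_setOf_eq] at *; linarith
  have hsub : Measurable fun x : Fin N → (Fin m → ℝ) => x i - x j :=
    (measurable_pi_apply i).sub (measurable_pi_apply j)
  have hf : Measurable fun x : Fin N → (Fin m → ℝ) => -(1/4 : ℝ) * sqNorm (x i - x j) :=
    (measurable_sqNorm.comp hsub).const_mul _
  refine le_trans (measure_mono hmono)
    (le_trans (chernoff _ _ hf (-((m:ℝ)/4))) ?_)
  have hgm : Measurable (Function.uncurry fun u v : Fin m → ℝ =>
      ENNReal.ofReal (Real.exp (-(1/4 : ℝ) * sqNorm (u - v)))) := by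
    apply Measurable.ennreal_ofReal
    apply Measurable.exp
    apply Measurable.const_mul
    exact measurable_sqNorm.comp (measurable_fst.sub measurable_snd)
  rw [lintegral_pi_pair (stdGauss m) i j hij
    (fun u v => ENNReal.ofReal (Real.exp (-(1/4 : ℝ) * sqNorm (u - v)))) hgm]
  rw [lintegral_congr fun u => stdGauss_shift u]
  have hpw : ∀ u : Fin m → ℝ,
      ENNReal.ofReal ((Real.sqrt (3/2)⁻¹) ^ m * Real.exp (-(1/6) * sqNorm u))
      = ENNReal.ofReal ((Real.sqrt (3/2)⁻¹) ^ m) *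
        ENNReal.ofReal (Real.exp (-(1/6) * sqNorm u)) := fun u =>
    ENNReal.ofReal_mul (pow_nonneg (Real.sqrt_nonneg _) _)
  rw [lintegral_congr hpw,
    lintegral_const_mul _ ((measurable_sqNorm.const_mul _).exp.ennreal_ofReal),
    stdGauss_mgf (-(1/6)) (by norm_num),
    show ((1 : ℝ) - 2 * (-(1/6)))⁻¹ = 3/4 by norm_num,
    ← ENNReal.ofReal_mul (pow_nonneg (Real.sqrt_nonneg _) _), ← mul_pow,
    ← Real.sqrt_mul (by norm_num : (0:ℝ) ≤ (3/2)⁻¹),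
    show ((3/2:ℝ))⁻¹ * (3/4) = 1/2 by norm_num,
    ← ENNReal.ofReal_mul (Real.exp_nonneg _)]
  apply ENNReal.ofReal_le_ofReal
  have hs0 : 0 < Real.sqrt (1/2) := Real.sqrt_pos.mpr (by norm_num)
  have h1 : (1.414:ℝ) ≤ Real.sqrt 2 :=
    (Real.le_sqrt (by norm_num) (by norm_num)).mpr (by norm_num)
  have h2 : Real.sqrt (1/2) = (Real.sqrt 2)⁻¹ := by
    rw [show (1/2 : ℝ) = 2⁻¹ by norm_num, Real.sqrt_inv]
  have hlog : Real.log (Real.sqrt (1/2)) ≤ -0.29 := by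
    rw [h2]
    refine le_trans (Real.log_le_sub_one_of_pos (by positivity)) ?_
    have h3 : (Real.sqrt 2)⁻¹ ≤ (1.414 : ℝ)⁻¹ := inv_anti₀ (by norm_num) h1
    have : ((1.414 : ℝ))⁻¹ - 1 ≤ -0.29 := by norm_num
    linarith
  rw [pow_eq_exp hs0, ← Real.exp_add]
  apply Real.exp_le_exp.mpr
  have hm' : (0:ℝ) ≤ m := Nat.cast_nonneg m
  nlinarith [mul_le_mul_of_nonneg_left hlog hm']

end Tails
section Final

lemma exp_neg_le_twentieth {c : ℝ} (hc : 19 ≤ c) : Real.exp (-c) ≤ 0.05 := by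
  rw [Real.exp_neg]
  have h := Real.add_one_le_exp c
  have h20 : (20:ℝ) ≤ Real.exp c := by linarith
  have := inv_anti₀ (by norm_num : (0:ℝ) < 20) h20
  linarith [this]

lemma final_numeric (m t : ℕ) (hm : 30000 ≤ m) (ht : (t:ℝ) ≤ Real.sqrt m/16000) :
    ((m^(13*t) : ℕ) : ℝ) * (Real.exp (-0.004*m) + Real.exp (-0.004*m))
      + ((m^(13*t) : ℕ) : ℝ) * (((m^(13*t) : ℕ) : ℝ) * Real.exp (-0.04*m)) ≤ 0.2 := by
  have hm' : (30000:ℝ) ≤ m := by exact_mod_cast hm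
  have hm1 : (1:ℝ) ≤ m := by linarith
  have hm0 : (0:ℝ) < m := by linarith
  have hsq : Real.sqrt m * Real.sqrt m = m := Real.mul_self_sqrt (by linarith)
  have hsqnn : 0 ≤ Real.sqrt (m:ℝ) := Real.sqrt_nonneg _
  have hlog : Real.log m ≤ 2 * Real.sqrt m := by
    have h1 : Real.log (Real.sqrt m) = Real.log m / 2 := Real.log_sqrt (by linarith)
    have h2 : Real.log (Real.sqrt m) ≤ Real.sqrt m - 1 :=
      Real.log_le_sub_one_of_pos (by positivity)
    linarith
  have hlognn : 0 ≤ Real.log m := Real.log_nonneg hm1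
  have hN : ((m^(13*t) : ℕ) : ℝ) = Real.exp ((13*(t:ℝ)) * Real.log m) := by
    push_cast
    rw [pow_eq_exp hm0]
    push_cast
    ring_nf
  have hL : (13*(t:ℝ)) * Real.log m ≤ 26 * m / 16000 := by
    have h1 : (13*(t:ℝ)) ≤ 13 * (Real.sqrt m / 16000) := by linarith
    have h2 : (13*(t:ℝ)) * Real.log m ≤ (13 * (Real.sqrt m / 16000)) * (2 * Real.sqrt m) :=
      mul_le_mul h1 hlog hlognn (by positivity)
    have h3 : (13 * (Real.sqrt m / 16000)) * (2 * Real.sqrt m)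
        = 26 * (Real.sqrt m * Real.sqrt m) / 16000 := by ring
    rw [h3, hsq] at h2
    exact h2
  set L := (13*(t:ℝ)) * Real.log m with hLdef
  have hterm1 : ((m^(13*t) : ℕ) : ℝ) * (Real.exp (-0.004*m) + Real.exp (-0.004*m)) ≤ 0.1 := by
    rw [hN]
    have h1 : Real.exp L * (Real.exp (-0.004*m) + Real.exp (-0.004*m))
        = 2 * Real.exp (L + -0.004*m) := by rw [Real.exp_add]; ring
    rw [h1]
    have h2 : L + -0.004*m ≤ -(71.25) := by
      have : 26 * (m:ℝ)/16000 - 0.004*m = -0.002375 * m := by ring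
      nlinarith
    have h3 : Real.exp (L + -0.004*m) ≤ Real.exp (-(71.25)) := Real.exp_le_exp.mpr h2
    have h4 : Real.exp (-(71.25:ℝ)) ≤ 0.05 := exp_neg_le_twentieth (by norm_num)
    linarith
  have hterm2 : ((m^(13*t) : ℕ) : ℝ) * (((m^(13*t) : ℕ) : ℝ) * Real.exp (-0.04*m)) ≤ 0.1 := by
    rw [hN]
    have h1 : Real.exp L * (Real.exp L * Real.exp (-0.04*m))
        = Real.exp (L + (L + -0.04*m)) := by rw [Real.exp_add, Real.exp_add]
    rw [h1]
    have h2 : L + (L + -0.04*m) ≤ -(71.25) := by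
      have : 26 * (m:ℝ)/16000 + 26 * (m:ℝ)/16000 - 0.04*m = -0.03675 * m := by ring
      nlinarith
    have h3 := Real.exp_le_exp.mpr h2
    have h4 : Real.exp (-(71.25:ℝ)) ≤ 0.05 := exp_neg_le_twentieth (by norm_num)
    linarith
  linarith

end Final

/-- norm concentration and pairwise separation of Gaussian samples.
Let `m, t` be positive integers with `m ≥ 30000` and `t ≤ √m/16000`, and let
`N = m^(13t)`. With probability at least `0.8` over `N` i.i.d. samples from
`N(0, I_m)`: (a) `0.9·√m ≤ ‖x_i‖₂ ≤ 1.1·√m` for every `i`; and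
(b) `‖x_i − x_j‖₂ ≥ √m` for all `i ≠ j`. -/
theorem stmt_3 (m t : ℕ) (ht0 : 0 < t) (hm : 30000 ≤ m)
    (ht : (t : ℝ) ≤ Real.sqrt m / 16000) :
    (Measure.pi fun _ : Fin (m^(13*t)) => stdGauss m)
      {x : Fin (m^(13*t)) → (Fin m → ℝ) |
        (∀ i, 0.9 * Real.sqrt m ≤ enorm2 (x i) ∧ enorm2 (x i) ≤ 1.1 * Real.sqrt m) ∧
        (∀ i j, i ≠ j → Real.sqrt m ≤ enorm2 (x i - x j))}
      ≥ ENNReal.ofReal 0.8 := by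
  classical
  set N := m^(13*t) with hNdef
  set P := Measure.pi fun _ : Fin N => stdGauss m with hPdef
  set S := {x : Fin N → (Fin m → ℝ) |
      (∀ i, 0.9 * Real.sqrt m ≤ enorm2 (x i) ∧ enorm2 (x i) ≤ 1.1 * Real.sqrt m) ∧
      (∀ i j, i ≠ j → Real.sqrt m ≤ enorm2 (x i - x j))} with hSdef
  have hm0 : (0:ℝ) ≤ m := Nat.cast_nonneg m
  -- measurability
  have henorm : ∀ i : Fin N, Measurable fun x : Fin N → (Fin m → ℝ) => enorm2 (x i) := by
    intro i
    exact (measurable_sqNorm.comp (measurable_pi_apply i)).sqrt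
  have henorm2 : ∀ i j : Fin N,
      Measurable fun x : Fin N → (Fin m → ℝ) => enorm2 (x i - x j) := by
    intro i j
    exact (measurable_sqNorm.comp
      ((measurable_pi_apply i).sub (measurable_pi_apply j))).sqrt
  have hS : MeasurableSet S := by
    rw [hSdef, Set.setOf_and]
    apply MeasurableSet.inter
    · rw [Set.setOf_forall]
      apply MeasurableSet.iInter
      intro i
      rw [Set.setOf_and]
      exact (measurableSet_le measurable_const (henorm i)).inter
        (measurableSet_le (henorm i) measurable_const)
    · rw [Set.setOf_forall]
      apply MeasurableSet.iInter
      intro i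
      rw [Set.setOf_forall]
      apply MeasurableSet.iInter
      intro j
      rcases eq_or_ne i j with h | h
      · have : {x : Fin N → (Fin m → ℝ) | i ≠ j → Real.sqrt m ≤ enorm2 (x i - x j)}
            = Set.univ := by
          ext x; simp [h]
        rw [this]
        exact MeasurableSet.univ
      · have : {x : Fin N → (Fin m → ℝ) | i ≠ j → Real.sqrt m ≤ enorm2 (x i - x j)}
            = {x | Real.sqrt m ≤ enorm2 (x i - x j)} := by
          ext x; simp [h]
        rw [this]
        exact measurableSet_le measurable_const (henorm2 i j)
  -- conversion facts
  have c1 : ∀ y : Fin m → ℝ, ¬(0.9 * Real.sqrt m ≤ enorm2 y) → sqNorm y ≤ 0.81 * m := by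
    intro y h
    have h' := not_le.mp h
    unfold enorm2 at h'
    nlinarith [Real.sq_sqrt (sqNorm_nonneg y), Real.sqrt_nonneg (sqNorm y),
      Real.sq_sqrt hm0, Real.sqrt_nonneg (m:ℝ)]
  have c2 : ∀ y : Fin m → ℝ, ¬(enorm2 y ≤ 1.1 * Real.sqrt m) → 1.21 * m ≤ sqNorm y := by
    intro y h
    have h' := not_le.mp h
    unfold enorm2 at h'
    nlinarith [Real.sq_sqrt (sqNorm_nonneg y), Real.sqrt_nonneg (sqNorm y),
      Real.sq_sqrt hm0, Real.sqrt_nonneg (m:ℝ)]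
  have c3 : ∀ y : Fin m → ℝ, ¬(Real.sqrt m ≤ enorm2 y) → sqNorm y ≤ (m:ℝ) := by
    intro y h
    have h' := not_le.mp h
    unfold enorm2 at h'
    nlinarith [Real.sq_sqrt (sqNorm_nonneg y), Real.sqrt_nonneg (sqNorm y),
      Real.sq_sqrt hm0, Real.sqrt_nonneg (m:ℝ)]
  -- union bound
  have hsub : Sᶜ ⊆ (⋃ i : Fin N, ({x : Fin N → (Fin m → ℝ) | sqNorm (x i) ≤ 0.81 * m}
        ∪ {x | 1.21 * m ≤ sqNorm (x i)}))
      ∪ (⋃ i : Fin N, ⋃ j : Fin N, ⋃ _h : i ≠ j,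
          {x : Fin N → (Fin m → ℝ) | sqNorm (x i - x j) ≤ (m:ℝ)}) := by
    intro x hx
    rw [Set.mem_compl_iff, hSdef, Set.mem_setOf_eq, not_and_or] at hx
    rcases hx with hx | hx
    · left
      obtain ⟨i, hi⟩ := not_forall.mp hx
      refine Set.mem_iUnion.mpr ⟨i, ?_⟩
      rcases not_and_or.mp hi with h | h
      · exact Or.inl (c1 _ h)
      · exact Or.inr (c2 _ h)
    · right
      obtain ⟨i, hi⟩ := not_forall.mp hx
      obtain ⟨j, hj⟩ := not_forall.mp hi
      rw [Classical.not_imp] at hj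
      refine Set.mem_iUnion.mpr ⟨i, Set.mem_iUnion.mpr ⟨j, Set.mem_iUnion.mpr ⟨hj.1, ?_⟩⟩⟩
      exact c3 _ hj.2
  have hbound1 : P (⋃ i : Fin N, ({x : Fin N → (Fin m → ℝ) | sqNorm (x i) ≤ 0.81 * m}
        ∪ {x | 1.21 * m ≤ sqNorm (x i)}))
      ≤ (N : ℝ≥0∞) * (ENNReal.ofReal (Real.exp (-0.004*m))
          + ENNReal.ofReal (Real.exp (-0.004*m))) := by
    refine le_trans (measure_iUnion_le _) ?_
    rw [tsum_fintype]
    refine le_trans (Finset.sum_le_sum (fun i _ => le_trans (measure_union_le _ _)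
      (add_le_add (bound_lo i) (bound_hi i)))) ?_
    rw [Finset.sum_const, Finset.card_univ, Fintype.card_fin, nsmul_eq_mul]
  have hbound2 : P (⋃ i : Fin N, ⋃ j : Fin N, ⋃ _h : i ≠ j,
        {x : Fin N → (Fin m → ℝ) | sqNorm (x i - x j) ≤ (m:ℝ)})
      ≤ (N : ℝ≥0∞) * ((N : ℝ≥0∞) * ENNReal.ofReal (Real.exp (-0.04*m))) := by
    refine le_trans (measure_iUnion_le _) ?_
    rw [tsum_fintype]
    have hinner : ∀ i : Fin N, P (⋃ j : Fin N, ⋃ _h : i ≠ j,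
        {x : Fin N → (Fin m → ℝ) | sqNorm (x i - x j) ≤ (m:ℝ)})
        ≤ (N : ℝ≥0∞) * ENNReal.ofReal (Real.exp (-0.04*m)) := by
      intro i
      refine le_trans (measure_iUnion_le _) ?_
      rw [tsum_fintype]
      have hj : ∀ j : Fin N, P (⋃ _h : i ≠ j,
          {x : Fin N → (Fin m → ℝ) | sqNorm (x i - x j) ≤ (m:ℝ)})
          ≤ ENNReal.ofReal (Real.exp (-0.04*m)) := by
        intro j
        rw [Set.iUnion_eq_if]
        split_ifs with h
        · exact bound_pair i j h
        · simp
      refine le_trans (Finset.sum_le_sum (fun j _ => hj j)) ?_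
      rw [Finset.sum_const, Finset.card_univ, Fintype.card_fin, nsmul_eq_mul]
    refine le_trans (Finset.sum_le_sum (fun i _ => hinner i)) ?_
    rw [Finset.sum_const, Finset.card_univ, Fintype.card_fin, nsmul_eq_mul]
  have hcompl : P Sᶜ ≤ ENNReal.ofReal 0.2 := by
    refine le_trans (measure_mono hsub) (le_trans (measure_union_le _ _) ?_)
    refine le_trans (add_le_add hbound1 hbound2) ?_
    have hNcast : (N : ℝ≥0∞) = ENNReal.ofReal (N : ℝ) := (ENNReal.ofReal_natCast N).symm
    rw [hNcast, ← ENNReal.ofReal_add (Real.exp_nonneg _) (Real.exp_nonneg _),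
      ← ENNReal.ofReal_mul (Nat.cast_nonneg N),
      ← ENNReal.ofReal_mul (Nat.cast_nonneg N),
      ← ENNReal.ofReal_mul (Nat.cast_nonneg N),
      ← ENNReal.ofReal_add (by positivity) (by positivity)]
    exact ENNReal.ofReal_le_ofReal (final_numeric m t hm ht)
  -- conclude
  have htot : P S + P Sᶜ = 1 := by
    rw [measure_add_measure_compl hS, measure_univ]
  have h1 : (1:ℝ≥0∞) = ENNReal.ofReal 0.8 + ENNReal.ofReal 0.2 := by
    rw [← ENNReal.ofReal_add (by norm_num) (by norm_num)]
    norm_num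
  have h2 : ENNReal.ofReal 0.8 + ENNReal.ofReal 0.2 ≤ P S + ENNReal.ofReal 0.2 := by
    rw [← h1, ← htot]
    exact add_le_add_right hcompl _
  exact (ENNReal.add_le_add_iff_right ENNReal.ofReal_ne_top).mp h2
end

section
/- Let m be a positive integer, η ∈ [0,1], and let M be a real m×m matrix with operator norm ‖M‖_op ≤ 1 and Frobenius norm satisfying ‖M‖_F² ≥ m − η. Then every singular value of M is at least √(1 − η), and consequently |det M| ≥ (1 − η)^{m/2}. -/
open Matrix

/-- Operator (spectral) norm of a square real matrix, via its action on Euclidean space. -/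
noncomputable def opNorm {m : ℕ} (M : Matrix (Fin m) (Fin m) ℝ) : ℝ :=
  ‖Matrix.toEuclideanCLM (𝕜 := ℝ) M‖

/-- Frobenius norm of a real matrix. -/
noncomputable def frobNorm {m n : ℕ} (M : Matrix (Fin m) (Fin n) ℝ) : ℝ :=
  Real.sqrt (∑ i, ∑ j, (M i j)^2)

/-- singular values and determinant from norm constraints.
Let `M` be a real `m×m` matrix with `‖M‖_op ≤ 1` and `‖M‖_F² ≥ m − η` for some
`η ∈ [0,1]`. Then every singular value of `M` (i.e. the square root of any eigenvalue of
`M Mᵀ`) is at least `√(1 − η)`, and consequently `|det M| ≥ (1 − η)^(m/2)`. -/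
theorem stmt_4 (m : ℕ) (hm : 0 < m) (η : ℝ) (hη0 : 0 ≤ η) (hη1 : η ≤ 1)
    (M : Matrix (Fin m) (Fin m) ℝ)
    (hop : opNorm M ≤ 1) (hF : frobNorm M ^ 2 ≥ (m : ℝ) - η) :
    (∀ lam ∈ spectrum ℝ (M * Mᵀ), Real.sqrt (1 - η) ≤ Real.sqrt lam) ∧
    (1 - η) ^ ((m : ℝ)/2) ≤ |M.det| := by
  haveI : Nonempty (Fin m) := ⟨⟨0, hm⟩⟩
  have hT : Mᵀ = star M := by ext i j; simp [conjTranspose_apply]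
  have hA : (M * Mᵀ).IsHermitian := by
    rw [hT]; exact isHermitian_mul_conjTranspose_self M
  set ev := hA.eigenvalues with hev
  -- spectrum = range of eigenvalues
  have hspec : spectrum ℝ (M * Mᵀ) = Set.range ev := by
    conv_lhs => rw [hA.spectral_theorem]
    rw [Unitary.conjStarAlgAut_apply, Unitary.spectrum_star_right_conjugate, spectrum_diagonal]
    have : RCLike.ofReal ∘ hA.eigenvalues = ev := by funext i; simp [hev]
    rw [this]
  -- operator norm bound on eigenvalues
  have hopA : ‖Matrix.toEuclideanCLM (𝕜 := ℝ) (M * Mᵀ)‖ ≤ 1 := by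
    have : ‖Matrix.toEuclideanCLM (𝕜 := ℝ) (M * Mᵀ)‖
        = ‖Matrix.toEuclideanCLM (𝕜 := ℝ) M‖ * ‖Matrix.toEuclideanCLM (𝕜 := ℝ) M‖ := by
      rw [hT, _root_.map_mul, map_star]; exact CStarRing.norm_self_mul_star
    rw [this]
    exact mul_le_one₀ hop (norm_nonneg _) hop
  have hub : ∀ i, ev i ≤ 1 := by
    intro i
    have h1 : ev i ∈ spectrum ℝ (M * Mᵀ) := hA.eigenvalues_mem_spectrum_real i
    rw [← AlgEquiv.spectrum_eq (toEuclideanCLM (𝕜 := ℝ) (n := Fin m)) (M * Mᵀ)] at h1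
    have := spectrum.norm_le_norm_of_mem h1
    have h2 : |ev i| ≤ 1 := le_trans this hopA
    exact (abs_le.mp h2).2
  -- trace = sum of eigenvalues
  have htrace : (M * Mᵀ).trace = ∑ i, ev i := by
    conv_lhs => rw [hA.spectral_theorem]
    rw [Unitary.conjStarAlgAut_apply, Matrix.trace_mul_cycle]
    have : (star (hA.eigenvectorUnitary : Matrix (Fin m) (Fin m) ℝ))
        * (hA.eigenvectorUnitary : Matrix (Fin m) (Fin m) ℝ) = 1 :=
      Unitary.coe_star_mul_self _
    rw [this, one_mul, Matrix.trace_diagonal]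
    simp [hev]
  -- trace = frobenius norm squared
  have htr2 : (M * Mᵀ).trace = ∑ i, ∑ j, (M i j)^2 := by
    simp [Matrix.trace, Matrix.diag, Matrix.mul_apply, sq]
  have hfrob : frobNorm M ^ 2 = ∑ i, ∑ j, (M i j)^2 := by
    rw [frobNorm]
    exact Real.sq_sqrt (Finset.sum_nonneg fun i _ =>
      Finset.sum_nonneg fun j _ => sq_nonneg _)
  have hsum : (m : ℝ) - η ≤ ∑ i, ev i := by
    rw [← htrace, htr2, ← hfrob]; exact hF
  -- lower bound on each eigenvalue
  have hlb : ∀ j, 1 - η ≤ ev j := by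
    intro j
    have hcard : (Finset.univ.erase j).card = m - 1 := by
      rw [Finset.card_erase_of_mem (Finset.mem_univ j), Finset.card_univ, Fintype.card_fin]
    have h1 : ∑ i ∈ Finset.univ.erase j, ev i ≤ (m : ℝ) - 1 := by
      calc ∑ i ∈ Finset.univ.erase j, ev i ≤ ∑ _i ∈ Finset.univ.erase j, (1 : ℝ) :=
            Finset.sum_le_sum fun i _ => hub i
        _ = ((m - 1 : ℕ) : ℝ) := by rw [Finset.sum_const, hcard]; simp
        _ = (m : ℝ) - 1 := by push_cast [Nat.cast_sub hm]; ring
    have h2 : ∑ i ∈ Finset.univ.erase j, ev i + ev j = ∑ i, ev i :=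
      Finset.sum_erase_add _ _ (Finset.mem_univ j)
    linarith
  have h0' : (0:ℝ) ≤ 1 - η := by linarith
  constructor
  · intro lam hmem
    rw [hspec] at hmem
    obtain ⟨i, rfl⟩ := hmem
    exact Real.sqrt_le_sqrt (hlb i)
  · -- determinant bound
    have hdet : (M * Mᵀ).det = ∏ i, ev i := by
      have := hA.det_eq_prod_eigenvalues
      simpa using this
    have hprod : (1 - η) ^ m ≤ ∏ i, ev i := by
      calc (1 - η) ^ m = ∏ _i : Fin m, (1 - η) := by simp
        _ ≤ ∏ i, ev i := Finset.prod_le_prod (fun _ _ => h0') (fun i _ => hlb i)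
    have hdet2 : (1 - η) ^ m ≤ M.det ^ 2 := by
      have : (M * Mᵀ).det = M.det ^ 2 := by rw [det_mul, det_transpose, sq]
      rw [← this, hdet]; exact hprod
    have key : (1 - η) ^ ((m : ℝ)/2) = Real.sqrt ((1 - η) ^ m) := by
      rw [Real.sqrt_eq_rpow, ← Real.rpow_natCast (1 - η) m, ← Real.rpow_mul h0']
      congr 1; ring
    rw [key, ← Real.sqrt_sq_eq_abs]
    exact Real.sqrt_le_sqrt hdet2
end

section
/- There exist absolute constants C > 0 and c ∈ (0,1) such that for every positive integer m, every δ ∈ (0, c), and every pair of vectors μ, μ' ∈ ℝ^m the following holds: letting p and q denote the densities of N(μ, δ·I_m) and N(μ', δ·I_m) respectively, the double integral ∬_{ℝ^m × ℝ^m} min{p(x), q(x')} dx dx' is at most C^m · δ^{m/2} · (log(1/δ))^m, and in particular at most C^m · δ^{0.4·m}. -/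
open MeasureTheory Matrix

private lemma min_le_sqrt_mul' {a b : ℝ} (ha : 0 ≤ a) (hb : 0 ≤ b) :
    min a b ≤ Real.sqrt a * Real.sqrt b := by
  rcases le_total a b with h | h
  · rw [min_eq_left h]
    calc a = Real.sqrt a * Real.sqrt a := (Real.mul_self_sqrt ha).symm
    _ ≤ Real.sqrt a * Real.sqrt b := by
        exact mul_le_mul_of_nonneg_left (Real.sqrt_le_sqrt h) (Real.sqrt_nonneg a)
  · rw [min_eq_right h]
    calc b = Real.sqrt b * Real.sqrt b := (Real.mul_self_sqrt hb).symm
    _ ≤ Real.sqrt a * Real.sqrt b := by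
        exact mul_le_mul_of_nonneg_right (Real.sqrt_le_sqrt h) (Real.sqrt_nonneg b)

private lemma gaussDensity_nonneg' {m : ℕ} (μ : Fin m → ℝ) {δ : ℝ} (hδ : 0 < δ)
    (x : Fin m → ℝ) : 0 ≤ gaussDensity μ δ x := by
  unfold gaussDensity
  have h2 : (0:ℝ) < 2 * Real.pi * δ := by positivity
  positivity

private lemma sqrt_gauss' {m : ℕ} (μ : Fin m → ℝ) {δ : ℝ} (hδ : 0 < δ) (x : Fin m → ℝ) :
    Real.sqrt (gaussDensity μ δ x)
      = (2 * Real.pi * δ) ^ (-(m:ℝ)/4) * Real.exp (-(sqNorm (x - μ)) / (4*δ)) := by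
  have h2 : (0:ℝ) < 2 * Real.pi * δ := by positivity
  unfold gaussDensity
  rw [Real.sqrt_mul (Real.rpow_nonneg h2.le _)]
  congr 1
  · rw [Real.sqrt_eq_rpow, ← Real.rpow_mul h2.le]
    congr 1; ring
  · rw [← Real.exp_half]
    congr 1; ring

private lemma exp_fun_eq {m : ℕ} {δ : ℝ} (hδ : 0 < δ) (a : Fin m → ℝ) (x : Fin m → ℝ) :
    Real.exp (-(sqNorm (x - a)) / (4*δ))
      = ∏ i, Real.exp (-(1/(4*δ)) * (x i - a i)^2) := by
  rw [← Real.exp_sum]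
  congr 1
  simp only [sqNorm, Pi.sub_apply]
  rw [neg_div, Finset.sum_div, ← Finset.sum_neg_distrib]
  refine Finset.sum_congr rfl fun i _ => ?_
  field_simp

private lemma exp_integrable' {m : ℕ} {δ : ℝ} (hδ : 0 < δ) (a : Fin m → ℝ) :
    Integrable (fun x : Fin m → ℝ => Real.exp (-(sqNorm (x - a)) / (4*δ))) := by
  have h1 : ∀ i : Fin m, Integrable (fun t : ℝ => Real.exp (-(1/(4*δ)) * (t - a i)^2)) := by
    intro i
    have := (integrable_exp_neg_mul_sq (b := 1/(4*δ)) (by positivity)).comp_sub_right (a i)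
    simpa using this
  have := Integrable.fintype_prod (f := fun (i : Fin m) (t : ℝ) =>
    Real.exp (-(1/(4*δ)) * (t - a i)^2)) h1
  refine this.congr ?_
  filter_upwards with x
  exact (exp_fun_eq hδ a x).symm

private lemma exp_integral' {m : ℕ} {δ : ℝ} (hδ : 0 < δ) (a : Fin m → ℝ) :
    ∫ x : Fin m → ℝ, Real.exp (-(sqNorm (x - a)) / (4*δ))
      = (Real.sqrt (4 * Real.pi * δ)) ^ m := by
  have h1 : ∀ i : Fin m, ∫ t : ℝ, Real.exp (-(1/(4*δ)) * (t - a i)^2)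
      = Real.sqrt (4 * Real.pi * δ) := by
    intro i
    rw [MeasureTheory.integral_sub_right_eq_self
      (fun t : ℝ => Real.exp (-(1/(4*δ)) * t^2)) (a i)]
    rw [integral_gaussian]
    congr 1
    field_simp
  calc ∫ x : Fin m → ℝ, Real.exp (-(sqNorm (x - a)) / (4*δ))
      = ∫ x : Fin m → ℝ, ∏ i, Real.exp (-(1/(4*δ)) * (x i - a i)^2) := by
        refine integral_congr_ae ?_
        filter_upwards with x using exp_fun_eq hδ a x
    _ = ∏ i : Fin m, ∫ t : ℝ, Real.exp (-(1/(4*δ)) * (t - a i)^2) :=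
        MeasureTheory.integral_fintype_prod_eq_prod
          (fun i t => Real.exp (-(1/(4*δ)) * (t - a i)^2))
    _ = (Real.sqrt (4 * Real.pi * δ)) ^ m := by
        rw [Finset.prod_congr rfl fun i _ => h1 i, Finset.prod_const, Finset.card_univ,
          Fintype.card_fin]

/-- Claim: the double integral of the min of two narrow Gaussian
densities is small. There are absolute constants `C > 0` and `c ∈ (0,1)` such that for
every positive integer `m`, every `δ ∈ (0, c)` and all means `μ, μ' ∈ ℝ^m`, the double
integral `∬ min{p(x), q(x')} dx dx'` of the densities `p, q` of `N(μ, δ·I_m)` and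
`N(μ', δ·I_m)` is at most `C^m·δ^(m/2)·(log(1/δ))^m`, and in particular at most
`C^m·δ^(0.4·m)`. -/
theorem stmt_5 :
    ∃ C c : ℝ, 0 < C ∧ 0 < c ∧ c < 1 ∧
      ∀ (m : ℕ), 0 < m → ∀ δ : ℝ, 0 < δ → δ < c → ∀ μ μ' : Fin m → ℝ,
        (∫ z : (Fin m → ℝ) × (Fin m → ℝ),
            min (gaussDensity μ δ z.1) (gaussDensity μ' δ z.2))
          ≤ C^m * δ^((m : ℝ)/2) * (Real.log (1/δ))^m ∧
        (∫ z : (Fin m → ℝ) × (Fin m → ℝ),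
            min (gaussDensity μ δ z.1) (gaussDensity μ' δ z.2))
          ≤ C^m * δ^(0.4 * (m : ℝ)) := by
  refine ⟨6, 1/4, by norm_num, by norm_num, by norm_num, ?_⟩
  intro m hm δ hδ hδc μ μ'
  have hδ1 : δ < 1 := lt_trans hδc (by norm_num)
  have h2 : (0:ℝ) < 2 * Real.pi * δ := by positivity
  set A : ℝ := (2 * Real.pi * δ) ^ (-(m:ℝ)/4) with hA
  have hApos : 0 < A := Real.rpow_pos_of_pos h2 _
  set g : (Fin m → ℝ) → ℝ := fun x => A * Real.exp (-(sqNorm (x - μ)) / (4*δ)) with hg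
  set h : (Fin m → ℝ) → ℝ := fun x => A * Real.exp (-(sqNorm (x - μ')) / (4*δ)) with hh
  have hgi : Integrable g := (exp_integrable' hδ μ).const_mul A
  have hhi : Integrable h := (exp_integrable' hδ μ').const_mul A
  -- Step 1: bound the integral by the product integral
  have step1 : (∫ z : (Fin m → ℝ) × (Fin m → ℝ),
      min (gaussDensity μ δ z.1) (gaussDensity μ' δ z.2))
      ≤ ∫ z : (Fin m → ℝ) × (Fin m → ℝ), g z.1 * h z.2 := by
    refine integral_mono_of_nonneg ?_ ?_ ?_
    · filter_upwards with z
      exact le_min (gaussDensity_nonneg' μ hδ z.1) (gaussDensity_nonneg' μ' hδ z.2)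
    · rw [show (volume : Measure ((Fin m → ℝ) × (Fin m → ℝ))) = volume.prod volume from
        MeasureTheory.Measure.volume_eq_prod _ _]
      exact hgi.mul_prod hhi
    · filter_upwards with z
      calc min (gaussDensity μ δ z.1) (gaussDensity μ' δ z.2)
          ≤ Real.sqrt (gaussDensity μ δ z.1) * Real.sqrt (gaussDensity μ' δ z.2) :=
            min_le_sqrt_mul' (gaussDensity_nonneg' μ hδ z.1) (gaussDensity_nonneg' μ' hδ z.2)
        _ = g z.1 * h z.2 := by rw [sqrt_gauss' μ hδ, sqrt_gauss' μ' hδ]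
  -- Step 2: compute the product integral
  have step2 : (∫ z : (Fin m → ℝ) × (Fin m → ℝ), g z.1 * h z.2)
      = (A * (Real.sqrt (4 * Real.pi * δ))^m) * (A * (Real.sqrt (4 * Real.pi * δ))^m) := by
    rw [show (volume : Measure ((Fin m → ℝ) × (Fin m → ℝ))) = volume.prod volume from
      MeasureTheory.Measure.volume_eq_prod _ _, MeasureTheory.integral_prod_mul]
    rw [hg, hh]
    rw [MeasureTheory.integral_const_mul, MeasureTheory.integral_const_mul,
      exp_integral' hδ μ, exp_integral' hδ μ']
  -- Step 3: simplify the value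
  have hval : (A * (Real.sqrt (4 * Real.pi * δ))^m) * (A * (Real.sqrt (4 * Real.pi * δ))^m)
      = ((2 * Real.pi * δ) ^ (-(1:ℝ)/2) * (4 * Real.pi * δ))^m := by
    have hAA : A * A = ((2 * Real.pi * δ) ^ (-(1:ℝ)/2))^m := by
      rw [hA, ← Real.rpow_natCast ((2 * Real.pi * δ) ^ (-(1:ℝ)/2)) m,
        ← Real.rpow_mul h2.le, ← Real.rpow_add h2]
      congr 1; ring
    have hss : (Real.sqrt (4 * Real.pi * δ))^m * (Real.sqrt (4 * Real.pi * δ))^m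
        = (4 * Real.pi * δ)^m := by
      rw [← mul_pow, Real.mul_self_sqrt (by positivity)]
    calc (A * (Real.sqrt (4 * Real.pi * δ))^m) * (A * (Real.sqrt (4 * Real.pi * δ))^m)
        = (A * A) * ((Real.sqrt (4 * Real.pi * δ))^m * (Real.sqrt (4 * Real.pi * δ))^m) := by
          ring
      _ = ((2 * Real.pi * δ) ^ (-(1:ℝ)/2))^m * (4 * Real.pi * δ)^m := by rw [hAA, hss]
      _ = _ := by rw [← mul_pow]
  -- Step 4: per-coordinate bound
  have hbase : (2 * Real.pi * δ) ^ (-(1:ℝ)/2) * (4 * Real.pi * δ) ≤ 6 * δ ^ ((1:ℝ)/2) := by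
    have ha : (0:ℝ) ≤ (2 * Real.pi * δ) ^ (-(1:ℝ)/2) * (4 * Real.pi * δ) := by
      have := Real.rpow_nonneg h2.le (-(1:ℝ)/2); positivity
    have hb : (0:ℝ) ≤ 6 * δ ^ ((1:ℝ)/2) := by positivity
    have hsq : ((2 * Real.pi * δ) ^ (-(1:ℝ)/2) * (4 * Real.pi * δ))^2
        ≤ (6 * δ ^ ((1:ℝ)/2))^2 := by
      have e1 : ((2 * Real.pi * δ) ^ (-(1:ℝ)/2))^2 = (2 * Real.pi * δ)⁻¹ := by
        rw [← Real.rpow_natCast ((2 * Real.pi * δ) ^ (-(1:ℝ)/2)) 2,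
          ← Real.rpow_mul h2.le,
          show (-(1:ℝ)/2) * ((2:ℕ):ℝ) = -1 by push_cast; ring, Real.rpow_neg_one]
      have e2 : (δ ^ ((1:ℝ)/2))^2 = δ := by
        rw [← Real.rpow_natCast (δ ^ ((1:ℝ)/2)) 2, ← Real.rpow_mul hδ.le,
          show ((1:ℝ)/2) * ((2:ℕ):ℝ) = 1 by push_cast; ring, Real.rpow_one]
      rw [mul_pow ((2 * Real.pi * δ) ^ (-(1:ℝ)/2)), e1, mul_pow (6:ℝ), e2]
      rw [inv_mul_le_iff₀ h2]
      have hπ : Real.pi ≤ 4 := le_of_lt (lt_trans Real.pi_lt_d2 (by norm_num))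
      have hπ0 : 0 < Real.pi := Real.pi_pos
      nlinarith [mul_nonneg (mul_nonneg hπ0.le (sq_nonneg δ))
        (by linarith : (0:ℝ) ≤ 72 - 16*Real.pi)]
    calc (2 * Real.pi * δ) ^ (-(1:ℝ)/2) * (4 * Real.pi * δ)
        = Real.sqrt (((2 * Real.pi * δ) ^ (-(1:ℝ)/2) * (4 * Real.pi * δ))^2) :=
          (Real.sqrt_sq ha).symm
      _ ≤ Real.sqrt ((6 * δ ^ ((1:ℝ)/2))^2) := Real.sqrt_le_sqrt hsq
      _ = 6 * δ ^ ((1:ℝ)/2) := Real.sqrt_sq hb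
  have hmain : (∫ z : (Fin m → ℝ) × (Fin m → ℝ),
      min (gaussDensity μ δ z.1) (gaussDensity μ' δ z.2))
      ≤ (6:ℝ)^m * δ^((m : ℝ)/2) := by
    have hpow : ((2 * Real.pi * δ) ^ (-(1:ℝ)/2) * (4 * Real.pi * δ))^m
        ≤ (6 * δ ^ ((1:ℝ)/2))^m := by
      refine pow_le_pow_left₀ ?_ hbase m
      have := Real.rpow_nonneg h2.le (-(1:ℝ)/2); positivity
    have hδm : (6 * δ ^ ((1:ℝ)/2))^m = (6:ℝ)^m * δ^((m : ℝ)/2) := by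
      rw [mul_pow, ← Real.rpow_natCast (δ ^ ((1:ℝ)/2)) m, ← Real.rpow_mul hδ.le]
      congr 2; ring
    calc (∫ z : (Fin m → ℝ) × (Fin m → ℝ),
        min (gaussDensity μ δ z.1) (gaussDensity μ' δ z.2))
        ≤ ∫ z : (Fin m → ℝ) × (Fin m → ℝ), g z.1 * h z.2 := step1
      _ = ((2 * Real.pi * δ) ^ (-(1:ℝ)/2) * (4 * Real.pi * δ))^m := by rw [step2, hval]
      _ ≤ (6 * δ ^ ((1:ℝ)/2))^m := hpow
      _ = (6:ℝ)^m * δ^((m : ℝ)/2) := hδm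
  constructor
  · -- first bound: multiply by (log(1/δ))^m ≥ 1
    have hlog : (1:ℝ) ≤ Real.log (1/δ) := by
      have h4 : (4:ℝ) < 1/δ := by
        rw [lt_div_iff₀ hδ]; linarith
      have : Real.exp 1 < 1/δ := lt_trans (lt_trans Real.exp_one_lt_d9 (by norm_num)) h4
      have := (Real.lt_log_iff_exp_lt (by positivity)).2 this
      linarith
    have h1le : (1:ℝ) ≤ (Real.log (1/δ))^m := one_le_pow₀ hlog
    exact le_trans hmain (le_mul_of_one_le_right (by positivity) h1le)
  · refine le_trans hmain ?_
    rw [mul_le_mul_iff_right₀ (by positivity)]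
    refine Real.rpow_le_rpow_of_exponent_ge hδ hδ1.le ?_
    have : (0:ℝ) ≤ (m:ℝ) := Nat.cast_nonneg m
    nlinarith
end

section
/- Let m ≤ d be positive integers, let A be a probability density on ℝ^m, and let V ∈ ℝ^{m×d} satisfy V Vᵀ = I_m. Define P_{A,V}(x) = A(Vx)·φ_d(x)/φ_m(Vx) for x ∈ ℝ^d. Then P_{A,V} is a probability density on ℝ^d, and ∫_{ℝ^d} min{P_{A,V}(x), φ_d(x)} dx = ∫_{ℝ^m} min{A(y), φ_m(y)} dy; consequently d_TV(P_{A,V}, N(0, I_d)) = d_TV(A, N(0, I_m)). -/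
open MeasureTheory Matrix

/-- Density of `P_{A,V}` on `ℝ^d`: agrees with `A` along the row span of `V` and is
standard Gaussian on the orthogonal complement. -/
noncomputable def embedDensity {m d : ℕ} (A : (Fin m → ℝ) → ℝ)
    (V : Matrix (Fin m) (Fin d) ℝ) (x : Fin d → ℝ) : ℝ :=
  A (V.mulVec x) * stdGaussDensity d x / stdGaussDensity m (V.mulVec x)

lemma stdGauss_pos (m : ℕ) (x : Fin m → ℝ) : 0 < stdGaussDensity m x := by
  unfold stdGaussDensity gaussDensity
  positivity

lemma stdGauss_eq (m : ℕ) (x : Fin m → ℝ) :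
    stdGaussDensity m x = (2 * Real.pi) ^ (-(m:ℝ)/2) * Real.exp (-(∑ i, (x i)^2) / 2) := by
  simp [stdGaussDensity, gaussDensity, sqNorm]

lemma gauss_int (k : ℕ) : ∫ y : Fin k → ℝ, stdGaussDensity k y = 1 := by
  have h1 : ∀ y : Fin k → ℝ, stdGaussDensity k y
      = (2 * Real.pi) ^ (-(k:ℝ)/2) * ∏ i, Real.exp (-(1/2) * (y i)^2) := by
    intro y
    rw [stdGauss_eq, ← Real.exp_sum]
    congr 2
    rw [neg_div, Finset.sum_div, ← Finset.sum_neg_distrib]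
    exact Finset.sum_congr rfl (fun i _ => by ring)
  simp_rw [h1]
  rw [MeasureTheory.integral_const_mul,
    integral_fintype_prod_volume_eq_pow (ι := Fin k) (fun t : ℝ => Real.exp (-(1/2) * t^2)),
    integral_gaussian]
  have h2 : Real.sqrt (Real.pi / (1/2)) = (2 * Real.pi) ^ ((1:ℝ)/2) := by
    rw [show Real.pi / (1/2) = 2 * Real.pi by ring]
    exact Real.sqrt_eq_rpow _
  rw [h2, Fintype.card_fin, ← Real.rpow_natCast ((2*Real.pi) ^ ((1:ℝ)/2)) k,
    ← Real.rpow_mul (le_of_lt (by positivity)), ← Real.rpow_add (by positivity)]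
  rw [show -(k:ℝ)/2 + 1/2 * k = 0 by ring, Real.rpow_zero]

/-- Master change-of-variables lemma: integrating `g(Vx)` against the conditional
Gaussian density ratio over `ℝ^d` gives the integral of `g` over `ℝ^m`. -/
lemma embed_master (m d : ℕ) (hmd : m ≤ d) (V : Matrix (Fin m) (Fin d) ℝ)
    (hV : V * Vᵀ = 1) (g : (Fin m → ℝ) → ℝ) :
    (∫ x : Fin d → ℝ, g (V.mulVec x) * (stdGaussDensity d x / stdGaussDensity m (V.mulVec x)))
      = ∫ y, g y := by
  set k := d - m with hk
  have hdk : m + k = d := Nat.add_sub_cancel' hmd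
  set ι := (Fin m ⊕ Fin k)
  let w : ι → EuclideanSpace ℝ (Fin d) :=
    Sum.elim (fun i => (WithLp.equiv 2 (Fin d → ℝ)).symm (V i)) (fun _ => 0)
  have hw : Orthonormal ℝ ((Set.range Sum.inl).restrict w) := by
    rw [orthonormal_iff_ite]
    rintro ⟨_, i, rfl⟩ ⟨_, j, rfl⟩
    have h := congrFun (congrFun hV i) j
    simp only [Matrix.mul_apply, Matrix.transpose_apply, Matrix.one_apply] at h
    simp only [Set.restrict_apply, Set.restrict, Set.domRestrict, w, Sum.elim_inl, PiLp.inner_apply, RCLike.inner_apply,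
      conj_trivial, WithLp.equiv_symm_apply, WithLp.ofLp_toLp, Subtype.mk.injEq, Sum.inl.injEq]
    convert h using 1 <;> simp [mul_comm, Subtype.ext_iff]
  have hcard : Module.finrank ℝ (EuclideanSpace ℝ (Fin d)) = Fintype.card ι := by
    simp [ι, finrank_euclideanSpace, hdk]
  obtain ⟨b, hb⟩ := hw.exists_orthonormalBasis_extension_of_card_eq hcard
  -- the measure-preserving change of variables
  let T : (ι → ℝ) ≃ᵐ (Fin d → ℝ) :=
    ((MeasurableEquiv.toLp 2 (ι → ℝ)).symm.symm.trans
      b.repr.symm.toHomeomorph.toMeasurableEquiv).trans (MeasurableEquiv.toLp 2 (Fin d → ℝ)).symm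
  have hT : MeasurePreserving T volume volume := by
    exact ((EuclideanSpace.volume_preserving_symm_measurableEquiv_toLp (Fin d)).comp
      (b.repr.symm.measurePreserving.comp
        (EuclideanSpace.volume_preserving_symm_measurableEquiv_toLp ι).symm) : _)
  have key : ∀ y : ι → ℝ, V.mulVec (T y) = fun i => y (Sum.inl i) := by
    intro y
    funext i
    have h1 : V.mulVec (T y) i
        = inner ℝ (w (Sum.inl i)) (b.repr.symm ((MeasurableEquiv.toLp 2 (ι → ℝ)).symm.symm y)) := by
      simp only [PiLp.inner_apply, RCLike.inner_apply, conj_trivial, w, Sum.elim_inl,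
        WithLp.equiv_symm_apply, WithLp.ofLp_toLp, Matrix.mulVec, dotProduct]
      exact Finset.sum_congr rfl (fun x _ => mul_comm _ _)
    rw [h1, ← hb _ ⟨i, rfl⟩, ← OrthonormalBasis.repr_apply_apply,
      LinearIsometryEquiv.apply_symm_apply]
    rfl
  have hnorm : ∀ y : ι → ℝ, ∑ j, (T y j)^2 = ∑ i : ι, (y i)^2 := by
    intro y
    have h2 := b.repr.symm.inner_map_map ((MeasurableEquiv.toLp 2 (ι → ℝ)).symm.symm y)
      ((MeasurableEquiv.toLp 2 (ι → ℝ)).symm.symm y)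
    simp only [PiLp.inner_apply, RCLike.inner_apply, conj_trivial] at h2
    calc ∑ j, (T y j)^2 = ∑ j, (T y j) * (T y j) := by simp [sq]
      _ = ∑ i : ι, y i * y i := h2
      _ = ∑ i : ι, (y i)^2 := by simp [sq]
  rw [← hT.integral_comp T.measurableEmbedding]
  have hpt : ∀ y : ι → ℝ,
      g (V.mulVec (T y)) * (stdGaussDensity d (T y) / stdGaussDensity m (V.mulVec (T y)))
      = g (fun i => y (Sum.inl i)) * stdGaussDensity k (fun j => y (Sum.inr j)) := by
    intro y
    rw [key]
    congr 1
    rw [stdGauss_eq, stdGauss_eq, stdGauss_eq, hnorm, Fintype.sum_sum_type]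
    have hsplit : (-(d:ℝ)/2) = (-(m:ℝ)/2) + (-(k:ℝ)/2) := by
      have : (m:ℝ) + k = d := by exact_mod_cast hdk
      linarith
    rw [hsplit, Real.rpow_add (by positivity)]
    rw [show -((∑ a, (y (Sum.inl a))^2) + ∑ c, (y (Sum.inr c))^2) / 2
        = -(∑ a, (y (Sum.inl a))^2)/2 + -(∑ c, (y (Sum.inr c))^2)/2 by ring, Real.exp_add]
    have e1 : Real.exp (-(∑ a, (y (Sum.inl a))^2)/2) ≠ 0 := Real.exp_ne_zero _
    have e2 : (2*Real.pi) ^ (-(m:ℝ)/2) ≠ 0 := by positivity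
    field_simp
  simp_rw [hpt]
  have hS := MeasureTheory.volume_measurePreserving_sumPiEquivProdPi_symm (fun _ : ι => ℝ)
  rw [← hS.integral_comp (MeasurableEquiv.measurableEmbedding _)]
  show (∫ p : (Fin m → ℝ) × (Fin k → ℝ), g p.1 * stdGaussDensity k p.2) = ∫ y, g y
  rw [MeasureTheory.Measure.volume_eq_prod, integral_prod_mul, gauss_int, mul_one]

lemma min_scale (a c D : ℝ) (hc : 0 < c) (hD : 0 ≤ D) :
    min (a * (D/c)) D = min a c * (D/c) := by
  rw [min_mul_of_nonneg _ _ (by positivity)]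
  congr 1
  field_simp

lemma abs_scale (a c D : ℝ) (hc : 0 < c) (hD : 0 ≤ D) :
    |a * (D/c) - D| = |a - c| * (D/c) := by
  have h : a * (D/c) - D = (a - c) * (D/c) := by field_simp
  rw [h, abs_mul, abs_of_nonneg (div_nonneg hD hc.le)]

/-- hidden-subspace embedding preserves total variation distance to
the Gaussian. Let `m ≤ d`, let `A` be a probability density on `ℝ^m`, and let
`V ∈ ℝ^{m×d}` satisfy `V Vᵀ = I_m`. Then `P_{A,V}(x) = A(Vx)·φ_d(x)/φ_m(Vx)` is a
probability density on `ℝ^d`, the integral of `min{P_{A,V}, φ_d}` equals that of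
`min{A, φ_m}`, and consequently `d_TV(P_{A,V}, N(0,I_d)) = d_TV(A, N(0,I_m))`. -/
theorem stmt_7 (m d : ℕ) (hm : 0 < m) (hmd : m ≤ d)
    (A : (Fin m → ℝ) → ℝ) (hAmeas : Measurable A)
    (hA0 : ∀ y, 0 ≤ A y) (hA1 : ∫ y, A y = 1)
    (V : Matrix (Fin m) (Fin d) ℝ) (hV : V * Vᵀ = 1) :
    (∫ x, embedDensity A V x = 1) ∧
    (∫ x, min (embedDensity A V x) (stdGaussDensity d x)
        = ∫ y, min (A y) (stdGaussDensity m y)) ∧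
    ((1/2) * ∫ x, |embedDensity A V x - stdGaussDensity d x|
        = (1/2) * ∫ y, |A y - stdGaussDensity m y|) := by
  refine ⟨?_, ?_, ?_⟩
  · simp only [embedDensity, mul_div_assoc]
    rw [embed_master m d hmd V hV A, hA1]
  · have hc : ∀ x : Fin d → ℝ, min (embedDensity A V x) (stdGaussDensity d x)
        = (fun y => min (A y) (stdGaussDensity m y)) (V.mulVec x)
            * (stdGaussDensity d x / stdGaussDensity m (V.mulVec x)) := by
      intro x
      rw [embedDensity, mul_div_assoc]
      exact min_scale _ _ _ (stdGauss_pos _ _) (stdGauss_pos _ _).le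
    simp_rw [hc]
    exact embed_master m d hmd V hV (fun y => min (A y) (stdGaussDensity m y))
  · congr 1
    have hc : ∀ x : Fin d → ℝ, |embedDensity A V x - stdGaussDensity d x|
        = (fun y => |A y - stdGaussDensity m y|) (V.mulVec x)
            * (stdGaussDensity d x / stdGaussDensity m (V.mulVec x)) := by
      intro x
      rw [embedDensity, mul_div_assoc]
      exact abs_scale _ _ _ (stdGauss_pos _ _) (stdGauss_pos _ _).le
    simp_rw [hc]
    exact embed_master m d hmd V hV (fun y => |A y - stdGaussDensity m y|)
end

section
/- Let m be a positive integer, δ ∈ (0, 2), and μ ∈ ℝ^m. Then 1 + χ²(N(μ, δ·I_m), N(0, I_m)) = (δ(2 − δ))^{−m/2} · exp(‖μ‖₂²/(2 − δ)). -/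
open MeasureTheory Matrix

/-- chi-squared divergence between a spherical Gaussian and the standard
Gaussian. For a positive integer `m`, `δ ∈ (0,2)` and `μ ∈ ℝ^m`,
`1 + χ²(N(μ, δ·I_m), N(0, I_m)) = (δ(2 − δ))^(−m/2)·exp(‖μ‖₂²/(2 − δ))`;
here `1 + χ²(P, Q) = ∫ P(x)²/Q(x) dx`. -/
theorem stmt_9 (m : ℕ) (hm : 0 < m) (δ : ℝ) (hδ0 : 0 < δ) (hδ2 : δ < 2)
    (μ : Fin m → ℝ) :
    ∫ x, (gaussDensity μ δ x)^2 / stdGaussDensity m x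
      = (δ * (2 - δ)) ^ (-(m : ℝ)/2) * Real.exp (sqNorm μ / (2 - δ)) := by
  have hπ : 0 < Real.pi := Real.pi_pos
  have hδ : δ ≠ 0 := hδ0.ne'
  have h2δ0 : (0:ℝ) < 2 - δ := by linarith
  have h2δ : (2:ℝ) - δ ≠ 0 := h2δ0.ne'
  set a : ℝ := (2 - δ) / (2 * δ) with ha_def
  have ha : 0 < a := by positivity
  set K : ℝ := (2 * Real.pi * δ) ^ (-(m:ℝ)) * (2 * Real.pi) ^ ((m:ℝ)/2)
      * Real.exp (sqNorm μ / (2 - δ)) with hK_def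
  have hbase : (0:ℝ) < 2 * Real.pi * δ := by positivity
  -- pointwise identity
  have hpt : ∀ x : Fin m → ℝ, (gaussDensity μ δ x)^2 / stdGaussDensity m x
      = K * ∏ i, Real.exp (-a * (x i - (2/(2-δ)) * μ i)^2) := by
    intro x
    have hexp : Real.exp (sqNorm μ / (2 - δ)) * ∏ i, Real.exp (-a * (x i - (2/(2-δ)) * μ i)^2)
        = Real.exp (-(sqNorm (x - μ)) / (2*δ)) ^ 2 / Real.exp (-(sqNorm (x - 0)) / (2*1)) := by
      rw [← Real.exp_sum, ← Real.exp_add, sq, ← Real.exp_add, ← Real.exp_sub]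
      congr 1
      simp only [sqNorm, Pi.sub_apply, Pi.zero_apply, sub_zero, neg_div, Finset.sum_div,
        ← Finset.sum_neg_distrib, ← Finset.sum_add_distrib, ← Finset.sum_sub_distrib]
      refine Finset.sum_congr rfl fun i _ => ?_
      rw [ha_def]
      field_simp
      ring
    have hA : ((2*Real.pi*δ) ^ (-(m:ℝ)/2))^2 = (2*Real.pi*δ) ^ (-(m:ℝ)) := by
      rw [← Real.rpow_natCast ((2*Real.pi*δ) ^ (-(m:ℝ)/2)) 2, ← Real.rpow_mul hbase.le]
      norm_num
    have hB : (2*Real.pi*(1:ℝ)) ^ (-(m:ℝ)/2) = ((2*Real.pi) ^ ((m:ℝ)/2))⁻¹ := by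
      rw [mul_one, neg_div, Real.rpow_neg (by positivity)]
    simp only [gaussDensity, stdGaussDensity]
    rw [hK_def, mul_assoc ((2 * Real.pi * δ) ^ (-(m:ℝ)) * (2 * Real.pi) ^ ((m:ℝ)/2)), hexp,
      mul_pow, hA, hB]
    have hE0 : Real.exp (-(sqNorm (x - 0)) / (2*1)) ≠ 0 := Real.exp_ne_zero _
    field_simp
  set c : Fin m → ℝ := fun i => (2/(2-δ)) * μ i with hc_def
  calc ∫ x, (gaussDensity μ δ x)^2 / stdGaussDensity m x
      = ∫ x : Fin m → ℝ, K * ∏ i, Real.exp (-a * (x i - c i)^2) := by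
        simp only [hpt, hc_def]
    _ = K * ∫ x : Fin m → ℝ, ∏ i, Real.exp (-a * (x i - c i)^2) := by
        rw [integral_const_mul]
    _ = K * ∏ i, ∫ t : ℝ, Real.exp (-a * (t - c i)^2) := by
        rw [integral_fintype_prod_volume_eq_prod (f := fun i (t:ℝ) => Real.exp (-a * (t - c i)^2))]
    _ = K * ∏ _i : Fin m, Real.sqrt (Real.pi / a) := by
        congr 1
        refine Finset.prod_congr rfl fun i _ => ?_
        rw [show (fun t : ℝ => Real.exp (-a * (t - c i)^2)) = fun t : ℝ => (fun s : ℝ => Real.exp (-a * s^2)) (t - c i) from rfl,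
          MeasureTheory.integral_sub_right_eq_self (fun s : ℝ => Real.exp (-a * s^2)) (c i),
          integral_gaussian]
    _ = K * (Real.pi / a) ^ ((m:ℝ)/2) := by
        rw [Finset.prod_const, Finset.card_univ, Fintype.card_fin,
          Real.sqrt_eq_rpow, ← Real.rpow_natCast ((Real.pi/a) ^ ((1:ℝ)/2)) m,
          ← Real.rpow_mul (by positivity)]
        norm_num
        left
        ring
    _ = (δ * (2 - δ)) ^ (-(m : ℝ)/2) * Real.exp (sqNorm μ / (2 - δ)) := by
        rw [hK_def]
        have h1 : (Real.pi / a) = 2*Real.pi*δ/(2-δ) := by rw [ha_def]; field_simp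
        have h2 : (2*Real.pi*δ:ℝ)^(-(m:ℝ)) = ((2*Real.pi*δ)^((-2):ℝ))^((m:ℝ)/2) := by
          rw [← Real.rpow_mul hbase.le]
          congr 1
          ring
        have h3 : (2*Real.pi*δ:ℝ)^((-2):ℝ) = ((2*Real.pi*δ)^2)⁻¹ := by
          rw [show ((-2):ℝ) = -((2:ℕ):ℝ) by norm_num, Real.rpow_neg hbase.le,
            Real.rpow_natCast]
        rw [h1, h2, h3]
        rw [← Real.mul_rpow (by positivity) (by positivity)]
        have h5 : (0:ℝ) < δ * (2-δ) := by positivity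
        have hfinal : (((2*Real.pi*δ:ℝ)^2)⁻¹ * (2*Real.pi)) ^ ((m:ℝ)/2) * (2*Real.pi*δ/(2-δ)) ^ ((m:ℝ)/2) = (δ*(2-δ)) ^ (-(m:ℝ)/2) := by
          rw [← Real.mul_rpow (by positivity) (by positivity), neg_div,
            Real.rpow_neg h5.le, ← Real.inv_rpow h5.le]
          congr 1
          field_simp
        linear_combination Real.exp (sqNorm μ / (2 - δ)) * hfinal
end

section
/- There exist absolute constants C > 0 and c' > 0 such that for every c ∈ (0, 1/4) and all positive integers m, d with d > (1/c)^{C/c} and m < d^{c/5}/C, there exists a set S of at least 2^{c'·d^{2c}} matrices in ℝ^{m×d} such that every A ∈ S satisfies A Aᵀ = I_m and every pair of distinct matrices A, A' ∈ S satisfies ‖A' Aᵀ‖_op ≤ C·d^{−1/2+2c}. -/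
open Matrix

set_option maxHeartbeats 1000000
set_option synthInstance.maxHeartbeats 1000000

open scoped Classical

noncomputable def sgn (b : Bool) : ℝ := if b then 1 else -1

lemma sgn_mul_self (b : Bool) : sgn b * sgn b = 1 := by cases b <;> simp [sgn]

lemma sgn_sq (b : Bool) : sgn b ^ 2 = 1 := by cases b <;> simp [sgn]

lemma sgn_inj : Function.Injective sgn := by
  intro a b h; cases a <;> cases b <;> simp [sgn] at h ⊢ <;> norm_num at h

lemma sgn_not (b : Bool) : sgn (!b) = - sgn b := by cases b <;> simp [sgn]

noncomputable def ip {n : ℕ} (x y : Fin n → Bool) : ℝ := ∑ i, sgn (x i) * sgn (y i)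

lemma ip_self {n : ℕ} (u : Fin n → Bool) : ip u u = n := by
  unfold ip
  rw [Finset.sum_congr rfl (fun i _ => sgn_mul_self (u i))]
  simp

lemma ip_comm {n : ℕ} (x y : Fin n → Bool) : ip x y = ip y x := by
  unfold ip; exact Finset.sum_congr rfl fun i _ => mul_comm _ _

lemma ip_not_right {n : ℕ} (x y : Fin n → Bool) : ip x (fun i => !(y i)) = - ip x y := by
  unfold ip
  rw [← Finset.sum_neg_distrib]
  exact Finset.sum_congr rfl fun i _ => by rw [sgn_not]; ring

lemma sum_exp_le (n : ℕ) (y : Fin n → Bool) (l : ℝ) :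
    ∑ x : Fin n → Bool, Real.exp (l * ip x y) ≤ 2 ^ n * Real.exp (l ^ 2 * n / 2) := by
  have h1 : ∀ x : Fin n → Bool,
      Real.exp (l * ip x y) = ∏ i, Real.exp (l * (sgn (x i) * sgn (y i))) := by
    intro x
    rw [← Real.exp_sum, ← Finset.mul_sum]
    rfl
  calc ∑ x : Fin n → Bool, Real.exp (l * ip x y)
      = ∑ x : Fin n → Bool, ∏ i, Real.exp (l * (sgn (x i) * sgn (y i))) := by
        exact Finset.sum_congr rfl fun x _ => h1 x
    _ = ∏ i : Fin n, ∑ b : Bool, Real.exp (l * (sgn b * sgn (y i))) := by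
        rw [Finset.prod_univ_sum]
        rw [Fintype.piFinset_univ]
    _ ≤ ∏ i : Fin n, (2 * Real.exp (l ^ 2 / 2)) := by
        apply Finset.prod_le_prod
        · intro i _; positivity
        · intro i _
          have h : ∑ b : Bool, Real.exp (l * (sgn b * sgn (y i)))
              = 2 * Real.cosh (l * sgn (y i)) := by
            rw [Fintype.sum_bool, Real.cosh_eq]
            simp [sgn]
            cases y i <;> simp [sgn] <;> ring
          rw [h]
          have h2 := Real.cosh_le_exp_half_sq (l * sgn (y i))
          have h3 : (l * sgn (y i)) ^ 2 = l ^ 2 := by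
            rw [mul_pow, sgn_sq, mul_one]
          rw [h3] at h2
          linarith
    _ = 2 ^ n * Real.exp (l ^ 2 * n / 2) := by
        rw [Finset.prod_const, Finset.card_univ, Fintype.card_fin, mul_pow,
          ← Real.exp_nat_mul]
        ring_nf

lemma count_ge_le (n : ℕ) (y : Fin n → Bool) (t l : ℝ) (hl : 0 ≤ l) :
    ((Finset.univ.filter fun x : Fin n → Bool => t ≤ ip x y).card : ℝ)
      ≤ 2 ^ n * Real.exp (l ^ 2 * n / 2 - l * t) := by
  have key : ((Finset.univ.filter fun x : Fin n → Bool => t ≤ ip x y).card : ℝ)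
      * Real.exp (l * t) ≤ 2 ^ n * Real.exp (l ^ 2 * n / 2) := by
    calc ((Finset.univ.filter fun x : Fin n → Bool => t ≤ ip x y).card : ℝ) * Real.exp (l * t)
        = ∑ _x ∈ Finset.univ.filter fun x : Fin n → Bool => t ≤ ip x y, Real.exp (l * t) := by
          rw [Finset.sum_const, nsmul_eq_mul]
      _ ≤ ∑ x ∈ Finset.univ.filter fun x : Fin n → Bool => t ≤ ip x y,
            Real.exp (l * ip x y) := by
          apply Finset.sum_le_sum
          intro x hx
          rw [Finset.mem_filter] at hx
          exact Real.exp_le_exp.mpr (mul_le_mul_of_nonneg_left hx.2 hl)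
      _ ≤ ∑ x : Fin n → Bool, Real.exp (l * ip x y) := by
          apply Finset.sum_le_sum_of_subset_of_nonneg (Finset.filter_subset _ _)
          intro x _ _; positivity
      _ ≤ 2 ^ n * Real.exp (l ^ 2 * n / 2) := sum_exp_le n y l
  have h := (le_div_iff₀ (Real.exp_pos (l * t))).mpr key
  rwa [Real.exp_sub, ← mul_div_assoc]

lemma count_le_le (n : ℕ) (y : Fin n → Bool) (t l : ℝ) (hl : 0 ≤ l) :
    ((Finset.univ.filter fun x : Fin n → Bool => ip x y ≤ -t).card : ℝ)
      ≤ 2 ^ n * Real.exp (l ^ 2 * n / 2 - l * t) := by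
  have hset : (Finset.univ.filter fun x : Fin n → Bool => ip x y ≤ -t)
      = Finset.univ.filter fun x : Fin n → Bool => t ≤ ip x (fun i => !(y i)) := by
    apply Finset.filter_congr
    intro x _
    rw [ip_not_right]
    constructor <;> intro h <;> simp only [le_neg] at * <;> linarith
  rw [hset]
  exact count_ge_le n _ t l hl

lemma bad_card_le (n : ℕ) (y : Fin n → Bool) (t l : ℝ) (hl : 0 ≤ l) :
    ((Finset.univ.filter fun x : Fin n → Bool => ¬ |ip x y| ≤ t).card : ℝ)
      ≤ 2 * (2 ^ n * Real.exp (l ^ 2 * n / 2 - l * t)) := by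
  have hsub : (Finset.univ.filter fun x : Fin n → Bool => ¬ |ip x y| ≤ t)
      ⊆ (Finset.univ.filter fun x : Fin n → Bool => t ≤ ip x y)
        ∪ (Finset.univ.filter fun x : Fin n → Bool => ip x y ≤ -t) := by
    intro x hx
    rw [Finset.mem_filter] at hx
    rw [Finset.mem_union, Finset.mem_filter, Finset.mem_filter]
    rcases abs_cases (ip x y) with ⟨he, _⟩ | ⟨he, _⟩
    · left; exact ⟨Finset.mem_univ x, by rw [← he]; exact le_of_lt (not_le.mp hx.2)⟩
    · right; refine ⟨Finset.mem_univ x, ?_⟩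
      have := le_of_lt (not_le.mp hx.2)
      linarith
  calc ((Finset.univ.filter fun x : Fin n → Bool => ¬ |ip x y| ≤ t).card : ℝ)
      ≤ (((Finset.univ.filter fun x : Fin n → Bool => t ≤ ip x y)
        ∪ (Finset.univ.filter fun x : Fin n → Bool => ip x y ≤ -t)).card : ℝ) := by
        exact_mod_cast Finset.card_le_card hsub
    _ ≤ (((Finset.univ.filter fun x : Fin n → Bool => t ≤ ip x y)).card : ℝ)
        + ((Finset.univ.filter fun x : Fin n → Bool => ip x y ≤ -t).card : ℝ) := by
        exact_mod_cast Finset.card_union_le _ _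
    _ ≤ _ := by
        have h1 := count_ge_le n y t l hl
        have h2 := count_le_le n y t l hl
        linarith

lemma greedy {α : Type*} [Fintype α] [Nonempty α] (good : α → α → Prop)
    (hs : ∀ x y, good x y → good y x) (hi : ∀ y, ¬ good y y)
    (N : ℕ) (β : ℝ)
    (hb : ∀ y, ((Finset.univ.filter fun x => ¬ good x y).card : ℝ) ≤ β)
    (hN : (N : ℝ) * β < Fintype.card α) :
    ∃ T : Finset α, T.card = N ∧ ∀ x ∈ T, ∀ y ∈ T, x ≠ y → good x y := by
  have hβ : 0 ≤ β := le_trans (Nat.cast_nonneg _) (hb (Classical.arbitrary α))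
  have main : ∀ k, k ≤ N → ∃ T : Finset α, T.card = k ∧
      ∀ x ∈ T, ∀ y ∈ T, x ≠ y → good x y := by
    intro k
    induction k with
    | zero => exact fun _ => ⟨∅, by simp⟩
    | succ k ih =>
      intro hk
      obtain ⟨T, hTc, hTg⟩ := ih (Nat.le_of_succ_le hk)
      set U := T.biUnion (fun y => Finset.univ.filter fun x => ¬ good x y) with hU_def
      have hUcard : (U.card : ℝ) < Fintype.card α := by
        calc (U.card : ℝ) ≤ ∑ y ∈ T, ((Finset.univ.filter fun x => ¬ good x y).card : ℝ) := by
              exact_mod_cast Finset.card_biUnion_le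
          _ ≤ ∑ _y ∈ T, β := Finset.sum_le_sum fun y _ => hb y
          _ = k * β := by rw [Finset.sum_const, hTc, nsmul_eq_mul]
          _ ≤ N * β := by
              apply mul_le_mul_of_nonneg_right _ hβ
              exact_mod_cast Nat.le_of_succ_le hk
          _ < Fintype.card α := hN
      have hUlt : U.card < (Finset.univ : Finset α).card := by
        rw [Finset.card_univ]; exact_mod_cast hUcard
      have hne : U ≠ Finset.univ := fun h => by rw [h] at hUlt; exact lt_irrefl _ hUlt
      obtain ⟨x, hxU⟩ : ∃ x, x ∉ U := by
        by_contra h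
        push_neg at h
        exact hne (Finset.eq_univ_iff_forall.mpr h)
      have hgood : ∀ y ∈ T, good x y := by
        intro y hy
        by_contra hg
        exact hxU (Finset.mem_biUnion.mpr ⟨y, hy, Finset.mem_filter.mpr ⟨Finset.mem_univ x, hg⟩⟩)
      have hxT : x ∉ T := by
        intro hxT
        exact hxU (Finset.mem_biUnion.mpr ⟨x, hxT,
          Finset.mem_filter.mpr ⟨Finset.mem_univ x, hi x⟩⟩)
      refine ⟨insert x T, by rw [Finset.card_insert_of_notMem hxT, hTc], ?_⟩
      intro a ha b hb' hab
      rcases Finset.mem_insert.mp ha with rfl | haT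
      · rcases Finset.mem_insert.mp hb' with rfl | hbT
        · exact absurd rfl hab
        · exact hgood b hbT
      · rcases Finset.mem_insert.mp hb' with rfl | hbT
        · exact hs b a (hgood a haT)
        · exact hTg a haT b hbT hab
  exact main N le_rfl

noncomputable def mat (m n d : ℕ) (hn : 0 < n) (u : Fin n → Bool) :
    Matrix (Fin m) (Fin d) ℝ :=
  fun i j => if (j : ℕ) < m * n ∧ (j : ℕ) / n = (i : ℕ)
    then sgn (u ⟨(j : ℕ) % n, Nat.mod_lt _ hn⟩) / Real.sqrt n else 0

lemma mat_mul_transpose (m n d : ℕ) (hn : 0 < n) (hmn : m * n ≤ d)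
    (u v : Fin n → Bool) :
    mat m n d hn u * (mat m n d hn v)ᵀ = (ip u v / n) • (1 : Matrix (Fin m) (Fin m) ℝ) := by
  ext i i'
  rw [Matrix.mul_apply]
  simp only [Matrix.transpose_apply, Matrix.smul_apply, Matrix.one_apply, smul_eq_mul]
  by_cases h : i = i'
  · subst h
    rw [if_pos rfl, mul_one]
    have hemb : ∀ r : Fin n, (i : ℕ) * n + (r : ℕ) < d := by
      intro r
      have hr := r.2
      have hi := i.2
      have h1 : (i : ℕ) * n + n ≤ m * n := by
        have h2 : ((i : ℕ) + 1) * n = (i : ℕ) * n + n := by ring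
        rw [← h2]
        exact Nat.mul_le_mul_right n i.2
      omega
    set e : Fin n → Fin d := fun r => ⟨(i : ℕ) * n + (r : ℕ), hemb r⟩ with he_def
    have hinj : Function.Injective e := by
      intro r r' hrr
      have : (i : ℕ) * n + (r : ℕ) = (i : ℕ) * n + (r' : ℕ) := congrArg Fin.val hrr
      exact Fin.ext (by omega)
    have hP : ∀ r : Fin n, ((e r : ℕ) < m * n ∧ (e r : ℕ) / n = (i : ℕ)) := by
      intro r
      constructor
      · show (i : ℕ) * n + (r : ℕ) < m * n
        have hr := r.2
        have h1 : ((i : ℕ) + 1) * n ≤ m * n := Nat.mul_le_mul_right n i.2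
        have h2 : ((i : ℕ) + 1) * n = (i : ℕ) * n + n := by ring
        omega
      · show ((i : ℕ) * n + (r : ℕ)) / n = (i : ℕ)
        rw [add_comm, Nat.add_mul_div_right _ _ hn, Nat.div_eq_of_lt r.2, zero_add]
    have hmod : ∀ r : Fin n, ((e r : ℕ)) % n = (r : ℕ) := by
      intro r
      show ((i : ℕ) * n + (r : ℕ)) % n = (r : ℕ)
      rw [add_comm, Nat.add_mul_mod_self_right, Nat.mod_eq_of_lt r.2]
    have hzero : ∀ j : Fin d, j ∉ Finset.univ.image e →
        mat m n d hn u i j * mat m n d hn v i j = 0 := by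
      intro j hj
      by_cases hPj : (j : ℕ) < m * n ∧ (j : ℕ) / n = (i : ℕ)
      · exfalso
        apply hj
        rw [Finset.mem_image]
        refine ⟨⟨(j : ℕ) % n, Nat.mod_lt _ hn⟩, Finset.mem_univ _, ?_⟩
        apply Fin.ext
        show (i : ℕ) * n + (j : ℕ) % n = (j : ℕ)
        have h3 : n * ((j : ℕ) / n) + (j : ℕ) % n = (j : ℕ) := Nat.div_add_mod _ _
        rw [hPj.2] at h3
        rw [mul_comm]
        exact h3
      · simp only [mat]
        rw [if_neg hPj, zero_mul]
    calc ∑ j : Fin d, mat m n d hn u i j * mat m n d hn v i j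
        = ∑ j ∈ Finset.univ.image e, mat m n d hn u i j * mat m n d hn v i j := by
          exact (Finset.sum_subset (Finset.subset_univ _) (fun j _ hj => hzero j hj)).symm
      _ = ∑ r : Fin n, mat m n d hn u i (e r) * mat m n d hn v i (e r) := by
          rw [Finset.sum_image (fun r _ r' _ h => hinj h)]
      _ = ∑ r : Fin n, sgn (u r) * sgn (v r) / n := by
          apply Finset.sum_congr rfl
          intro r _
          rw [mat, mat, if_pos (hP r), if_pos (hP r)]
          have hidx : (⟨((e r : ℕ)) % n, Nat.mod_lt _ hn⟩ : Fin n) = r :=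
            Fin.ext (hmod r)
          rw [hidx]
          rw [div_mul_div_comm, Real.mul_self_sqrt (Nat.cast_nonneg n)]
      _ = ip u v / n := by rw [← Finset.sum_div]; rfl
  · rw [if_neg h, mul_zero]
    apply Finset.sum_eq_zero
    intro j _
    by_cases h1 : (j : ℕ) < m * n ∧ (j : ℕ) / n = (i : ℕ)
    · have h2 : ¬((j : ℕ) < m * n ∧ (j : ℕ) / n = (i' : ℕ)) := by
        intro h2
        exact h (Fin.ext (h1.2.symm.trans h2.2))
      simp only [mat]
      rw [if_neg h2, mul_zero]
    · simp only [mat]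
      rw [if_neg h1, zero_mul]

lemma mat_injective (m n d : ℕ) (hm : 0 < m) (hn : 0 < n) (hnd : n ≤ d) :
    Function.Injective (mat m n d hn) := by
  intro u v h
  funext r
  have hj : (r : ℕ) < d := lt_of_lt_of_le r.2 hnd
  have hcond : ((⟨(r : ℕ), hj⟩ : Fin d) : ℕ) < m * n ∧
      ((⟨(r : ℕ), hj⟩ : Fin d) : ℕ) / n = ((⟨0, hm⟩ : Fin m) : ℕ) := by
    constructor
    · show (r : ℕ) < m * n
      calc (r : ℕ) < n := r.2
        _ = 1 * n := (one_mul n).symm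
        _ ≤ m * n := Nat.mul_le_mul_right n hm
    · show (r : ℕ) / n = 0
      exact Nat.div_eq_of_lt r.2
  have heq := congrFun (congrFun h ⟨0, hm⟩) ⟨(r : ℕ), hj⟩
  rw [mat, mat, if_pos hcond, if_pos hcond] at heq
  have hs : Real.sqrt n ≠ 0 := by
    apply ne_of_gt
    apply Real.sqrt_pos.mpr
    exact_mod_cast hn
  have heq2 : sgn (u ⟨((⟨(r : ℕ), hj⟩ : Fin d) : ℕ) % n, Nat.mod_lt _ hn⟩)
      = sgn (v ⟨((⟨(r : ℕ), hj⟩ : Fin d) : ℕ) % n, Nat.mod_lt _ hn⟩) := by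
    rw [div_eq_mul_inv, div_eq_mul_inv] at heq
    exact mul_right_cancel₀ (inv_ne_zero hs) heq
  have hidx : (⟨((⟨(r : ℕ), hj⟩ : Fin d) : ℕ) % n, Nat.mod_lt _ hn⟩ : Fin n) = r :=
    Fin.ext (Nat.mod_eq_of_lt r.2)
  rw [hidx] at heq2
  exact sgn_inj heq2

lemma opNorm_smul_one {m : ℕ} (hm : 0 < m) (γ : ℝ) :
    opNorm (γ • (1 : Matrix (Fin m) (Fin m) ℝ)) = |γ| := by
  haveI : Nonempty (Fin m) := ⟨⟨0, hm⟩⟩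
  haveI : Nontrivial (EuclideanSpace ℝ (Fin m)) := by
    refine ⟨0, EuclideanSpace.single ⟨0, hm⟩ 1, ?_⟩
    intro hcontra
    have := congrArg (fun f : EuclideanSpace ℝ (Fin m) => f ⟨0, hm⟩) hcontra
    simp [EuclideanSpace.single] at this
  unfold opNorm
  rw [_root_.map_smul, _root_.map_one]
  rw [norm_smul γ (1 : EuclideanSpace ℝ (Fin m) →L[ℝ] EuclideanSpace ℝ (Fin m))]
  rw [ContinuousLinearMap.one_def, ContinuousLinearMap.norm_id, mul_one, Real.norm_eq_abs]


/-- Lemma: a large family of pairwise nearly-orthogonal row-orthonormal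
matrices. There are absolute constants `C > 0` and `c' > 0` such that for every
`c ∈ (0, 1/4)` and positive integers `m, d` with `d > (1/c)^(C/c)` and `m < d^(c/5)/C`,
there is a set `S` of at least `2^(c'·d^(2c))` matrices in `ℝ^{m×d}` with `A Aᵀ = I_m`
for every `A ∈ S` and `‖A' Aᵀ‖_op ≤ C·d^(−1/2+2c)` for all distinct `A, A' ∈ S`. -/
theorem stmt_14 :
    ∃ C c' : ℝ, 0 < C ∧ 0 < c' ∧
      ∀ (c : ℝ), 0 < c → c < 1/4 →
      ∀ (m d : ℕ), 0 < m → 0 < d →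
        (d : ℝ) > (1/c)^(C/c) → (m : ℝ) < (d : ℝ)^(c/5)/C →
        ∃ S : Finset (Matrix (Fin m) (Fin d) ℝ),
          ((S.card : ℝ) ≥ 2^(c' * (d : ℝ)^(2*c))) ∧
          (∀ A ∈ S, A * Aᵀ = 1) ∧
          (∀ A ∈ S, ∀ A' ∈ S, A ≠ A' →
            opNorm (A' * Aᵀ) ≤ C * (d : ℝ)^(-(1 : ℝ)/2 + 2*c)) := by
  refine ⟨4, 1, by norm_num, by norm_num, ?_⟩
  intro c hc hc4 m d hm hd hdlb hmub
  have hd0 : (0:ℝ) < d := by exact_mod_cast hd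
  have h1c : (4:ℝ) < 1/c := by rw [lt_div_iff₀ hc]; linarith
  have hd1 : (1:ℝ) < d := by
    refine lt_trans ?_ hdlb
    refine (Real.one_lt_rpow_iff_of_pos (by positivity)).mpr ?_
    left
    exact ⟨by linarith, by positivity⟩
  have hm4 : (m:ℝ) < (d:ℝ)/4 := by
    have h5 : (d:ℝ)^(c/5) ≤ (d:ℝ)^(1:ℝ) :=
      Real.rpow_le_rpow_of_exponent_le hd1.le (by linarith)
    rw [Real.rpow_one] at h5
    calc (m:ℝ) < (d:ℝ)^(c/5)/4 := hmub
      _ ≤ (d:ℝ)/4 := by linarith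
  have h4m : 4 * m < d := by
    have : ((4*m : ℕ):ℝ) < d := by push_cast; linarith
    exact_mod_cast this
  have hmd : m ≤ d := by omega
  set n := d / m with hn_def
  have hn_pos : 0 < n := Nat.div_pos hmd hm
  have hmn : m * n ≤ d := by
    rw [hn_def, mul_comm]
    exact Nat.div_mul_le_self d m
  have hnd : n ≤ d := Nat.div_le_self _ _
  have hn0R : (0:ℝ) < n := by exact_mod_cast hn_pos
  have hd2mn : (d:ℝ) ≤ 2 * m * n := by
    have h1 : m * (d / m) + d % m = d := Nat.div_add_mod d m
    have h2 : d % m < m := Nat.mod_lt d hm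
    have h3 : m ≤ m * n := Nat.le_mul_of_pos_right m hn_pos
    have h4 : d ≤ 2 * (m * n) := by
      rw [hn_def] at h3 ⊢
      omega
    calc (d:ℝ) ≤ ((2 * (m * n) : ℕ) : ℝ) := by exact_mod_cast h4
      _ = 2 * m * n := by push_cast; ring
  set ε := (d:ℝ)^(-(1:ℝ)/2 + 2*c) with hε_def
  have hε_pos : 0 < ε := Real.rpow_pos_of_pos hd0 _
  have hε1 : ε < 1 := Real.rpow_lt_one_of_one_lt_of_neg hd1 (by linarith)
  have hε2 : ε^2 = (d:ℝ)^(-(1:ℝ) + 4*c) := by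
    rw [hε_def, ← Real.rpow_natCast ((d:ℝ)^(-(1:ℝ)/2 + 2*c)) 2, ← Real.rpow_mul hd0.le]
    congr 1
    push_cast
    ring
  set t := (n:ℝ) * ε with ht_def
  have ht_lt : t < n := by
    calc t = (n:ℝ) * ε := ht_def
      _ < (n:ℝ) * 1 := mul_lt_mul_of_pos_left hε1 hn0R
      _ = n := mul_one _
  -- key inequality chain
  have h4mub : 4 * (m:ℝ) < (d:ℝ)^(c/5) := by
    have := hmub; linarith
  have hdeps : (d:ℝ) * ε^2 = (d:ℝ)^((1:ℝ) + (-(1:ℝ) + 4*c)) := by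
    rw [Real.rpow_add hd0, Real.rpow_one, hε2]
  have hstep1 : (d:ℝ)^(4*c - c/5) < (n:ℝ)*ε^2/2 := by
    have hA : (d:ℝ)^(4*c - c/5) = (d:ℝ) * ε^2 / (d:ℝ)^(c/5) := by
      rw [hdeps, ← Real.rpow_sub hd0]
      congr 1
      ring
    have hB : (d:ℝ) * ε^2 / (d:ℝ)^(c/5) < (d:ℝ) * ε^2 / (4*m) := by
      apply div_lt_div_of_pos_left (by positivity) (by positivity) h4mub
    have hC : (d:ℝ) * ε^2 / (4*m) ≤ (n:ℝ)*ε^2/2 := by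
      rw [div_le_div_iff₀ (by positivity) (by norm_num)]
      nlinarith [hd2mn, sq_nonneg ε, hε_pos, hn0R]
    rw [hA]
    linarith
  have hstep2 : 4*(d:ℝ)^(2*c) ≤ (d:ℝ)^(4*c - c/5) := by
    have h9 : (4:ℝ) ≤ (d:ℝ)^((9:ℝ)*c/5) := by
      have ha : ((1/c : ℝ)^((4:ℝ)/c))^((9:ℝ)*c/5) ≤ (d:ℝ)^((9:ℝ)*c/5) :=
        Real.rpow_le_rpow (by positivity) hdlb.le (by positivity)
      have hb : ((1/c : ℝ)^((4:ℝ)/c))^((9:ℝ)*c/5) = (1/c : ℝ)^((36:ℝ)/5) := by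
        rw [← Real.rpow_mul (by positivity : (0:ℝ) ≤ 1/c)]
        congr 1
        field_simp
        ring
      have hcc : ((4:ℝ))^((36:ℝ)/5) ≤ (1/c : ℝ)^((36:ℝ)/5) :=
        Real.rpow_le_rpow (by norm_num) h1c.le (by norm_num)
      have hdd : (4:ℝ) ≤ (4:ℝ)^((36:ℝ)/5) := by
        nth_rewrite 1 [← Real.rpow_one (4:ℝ)]
        exact Real.rpow_le_rpow_of_exponent_le (by norm_num) (by norm_num)
      linarith
    have hsplit : (d:ℝ)^(4*c - c/5) = (d:ℝ)^(2*c) * (d:ℝ)^((9:ℝ)*c/5) := by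
      rw [← Real.rpow_add hd0]
      congr 1
      ring
    rw [hsplit]
    have hpos : (0:ℝ) < (d:ℝ)^(2*c) := Real.rpow_pos_of_pos hd0 _
    nlinarith
  have hd2c1 : (1:ℝ) ≤ (d:ℝ)^(2*c) := by
    have h := Real.rpow_le_rpow_of_exponent_le hd1.le (show (0:ℝ) ≤ 2*c by linarith)
    rwa [Real.rpow_zero] at h
  set N := Nat.ceil ((2:ℝ)^((d:ℝ)^(2*c))) with hN_def
  have hX1 : (1:ℝ) ≤ (2:ℝ)^((d:ℝ)^(2*c)) := by
    have h := Real.rpow_le_rpow_of_exponent_le (show (1:ℝ) ≤ 2 by norm_num)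
      (show (0:ℝ) ≤ (d:ℝ)^(2*c) by positivity)
    rwa [Real.rpow_zero] at h
  have hNlb : (2:ℝ)^((d:ℝ)^(2*c)) ≤ N := Nat.le_ceil _
  have hNub : (N:ℝ) < (2:ℝ)^((d:ℝ)^(2*c)) + 1 := Nat.ceil_lt_add_one (by linarith)
  have h2N : 2*(N:ℝ) < Real.exp ((n:ℝ)*ε^2/2) := by
    have hlog2 : Real.log 2 < 1 := by
      have := Real.log_two_lt_d9; linarith
    have hlog2pos : 0 < Real.log 2 := Real.log_pos (by norm_num)
    have hchain : ((d:ℝ)^(2*c) + 2) * Real.log 2 < (n:ℝ)*ε^2/2 := by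
      have h1 : ((d:ℝ)^(2*c) + 2) * Real.log 2 ≤ (d:ℝ)^(2*c) + 2 := by
        nlinarith [hd2c1]
      have h2 : (d:ℝ)^(2*c) + 2 ≤ 3*(d:ℝ)^(2*c) := by linarith
      have h3 : 3*(d:ℝ)^(2*c) < (n:ℝ)*ε^2/2 := by
        have := hstep1
        have := hstep2
        linarith
      linarith
    have h22 : (2:ℝ)^((2:ℝ)) = 4 := by
      rw [show (2:ℝ) = ((2:ℕ):ℝ) by norm_num]
      rw [Real.rpow_natCast]
      norm_num
    have hsplit : (2:ℝ)^((d:ℝ)^(2*c) + 2) = (2:ℝ)^((d:ℝ)^(2*c)) * 4 := by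
      rw [Real.rpow_add (by norm_num : (0:ℝ) < 2)]
      rw [h22]
    have hbig : 2*(N:ℝ) ≤ (2:ℝ)^((d:ℝ)^(2*c) + 2) := by
      rw [hsplit]
      nlinarith [hX1, hNub]
    have hpow : (2:ℝ)^((d:ℝ)^(2*c) + 2) = Real.exp (((d:ℝ)^(2*c) + 2) * Real.log 2) := by
      rw [Real.rpow_def_of_pos (by norm_num : (0:ℝ) < 2)]
      rw [mul_comm]
    calc 2*(N:ℝ) ≤ (2:ℝ)^((d:ℝ)^(2*c) + 2) := hbig
      _ = Real.exp (((d:ℝ)^(2*c) + 2) * Real.log 2) := hpow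
      _ < Real.exp ((n:ℝ)*ε^2/2) := Real.exp_lt_exp.mpr hchain
  -- apply greedy
  have hcardfun : ((Fintype.card (Fin n → Bool)) : ℝ) = 2^n := by
    rw [Fintype.card_fun]
    push_cast
    simp
  have hNβ : (N:ℝ) * (2 * (2 ^ n * Real.exp (ε ^ 2 * n / 2 - ε * t))) <
      Fintype.card (Fin n → Bool) := by
    rw [hcardfun]
    have hexp_eq : ε ^ 2 * (n:ℝ) / 2 - ε * t = -((n:ℝ)*ε^2/2) := by
      rw [ht_def]; ring
    rw [hexp_eq]
    have h2n : (0:ℝ) < 2^n := by positivity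
    have hred : 2*(N:ℝ) * Real.exp (-((n:ℝ)*ε^2/2)) < 1 := by
      rw [Real.exp_neg, ← div_eq_mul_inv, div_lt_one (Real.exp_pos _)]
      exact h2N
    calc (N:ℝ) * (2 * (2 ^ n * Real.exp (-((n:ℝ)*ε^2/2))))
        = (2:ℝ)^n * (2*(N:ℝ) * Real.exp (-((n:ℝ)*ε^2/2))) := by ring
      _ < (2:ℝ)^n * 1 := mul_lt_mul_of_pos_left hred h2n
      _ = 2^n := mul_one _
  obtain ⟨T, hTcard, hTgood⟩ := greedy (α := Fin n → Bool)
    (good := fun x y => |ip x y| ≤ t)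
    (fun x y h => by
      show |ip y x| ≤ t
      rw [ip_comm]
      exact h)
    (fun y => by
      show ¬ |ip y y| ≤ t
      rw [ip_self, abs_of_pos hn0R]
      exact not_le.mpr ht_lt)
    N (2 * (2 ^ n * Real.exp (ε ^ 2 * n / 2 - ε * t)))
    (fun y => bad_card_le n y t ε hε_pos.le)
    hNβ
  refine ⟨T.image (mat m n d hn_pos), ?_, ?_, ?_⟩
  · rw [Finset.card_image_of_injective T (mat_injective m n d hm hn_pos hnd), hTcard, one_mul]
    exact hNlb
  · intro A hA
    obtain ⟨u, hu, rfl⟩ := Finset.mem_image.mp hA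
    rw [mat_mul_transpose m n d hn_pos hmn u u, ip_self, div_self hn0R.ne', one_smul]
  · intro A hA A' hA' hne
    obtain ⟨u, hu, rfl⟩ := Finset.mem_image.mp hA
    obtain ⟨v, hv, rfl⟩ := Finset.mem_image.mp hA'
    have huv : v ≠ u := fun hvu => hne (by rw [hvu])
    have hgood := hTgood v hv u hu huv
    rw [mat_mul_transpose m n d hn_pos hmn v u, opNorm_smul_one hm]
    rw [abs_div, abs_of_pos hn0R]
    have h2 : t / n = ε := by
      rw [ht_def, mul_comm, mul_div_assoc, div_self hn0R.ne', mul_one]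
    have h1 : |ip v u| / (n:ℝ) ≤ ε := by
      rw [← h2]
      gcongr
    calc |ip v u| / (n:ℝ) ≤ ε := h1
      _ ≤ 4 * ε := by linarith
end
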